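/- arXiv:2011.11418 — 2 statements merged into one kernel-verified Lean document; each statement's English description precedes it below -/
import Mathlib

section
/- Let (V,μ) be a simple, strongly connected, finite weighted directed graph with Ricci curvature κ ≥ K > 0 and sup_x 𝒟_x ≤ Λ (Λ ≥ 1). Then for every 1-Lipschitz f : V → ℝ with 𝔪(f) = 0 and every λ ≥ 0, 𝔪(e^{λf}) ≤ e^{λ²Λ²/(4K)}. -/
open Finset

namespace Chung

variable {V : Type*}

/-- There is a directed path of length `n` from `x` to `y` (edges are pairs of
positive weight). -/
def PathLen (μ : V → V → ℝ) (n : ℕ) (x y : V) : Prop :=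
  ∃ p : ℕ → V, p 0 = x ∧ p n = y ∧ ∀ i < n, 0 < μ (p i) (p (i + 1))

/-- The (non-symmetric) graph distance: the minimal length of a directed path. -/
noncomputable def gdist (μ : V → V → ℝ) (x y : V) : ℝ :=
  (sInf {n : ℕ | PathLen μ n x y} : ℕ)

/-- `(V,μ)` is a simple, strongly connected weighted directed graph. -/
def IsGraph (μ : V → V → ℝ) : Prop :=
  (∀ x y, 0 ≤ μ x y) ∧ (∀ x, μ x x = 0) ∧ (∀ x y, ∃ n, PathLen μ n x y)

variable [Fintype V]

/-- The transition probability kernel `P(x,y) = μ_{xy}/μ(x)`. -/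
noncomputable def ker (μ : V → V → ℝ) (x y : V) : ℝ := μ x y / ∑ z, μ x z

/-- `m` is the Perron (stationary probability) measure of the kernel `P`. -/
def IsPerron (μ : V → V → ℝ) (m : V → ℝ) : Prop :=
  (∀ x, 0 < m x) ∧ (∑ x, m x = 1) ∧ ∀ y, m y = ∑ x, m x * ker μ x y

/-- The mean transition probability kernel `𝒫 = (P + ←P)/2`,
where `←P(x,y) = m(y)P(y,x)/m(x)`. -/
noncomputable def meanKer (μ : V → V → ℝ) (m : V → ℝ) (x y : V) : ℝ :=
  (ker μ x y + m y * ker μ y x / m x) / 2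

variable [DecidableEq V]

/-- The Chung Laplacian `ℒ = I − 𝒫` as a matrix. -/
noncomputable def lapMat (μ : V → V → ℝ) (m : V → ℝ) : Matrix V V ℝ :=
  1 - Matrix.of (meanKer μ m)

/-- The Chung Laplacian applied to a function. -/
noncomputable def lap (μ : V → V → ℝ) (m : V → ℝ) (f : V → ℝ) : V → ℝ :=
  (lapMat μ m).mulVec f

/-- The heat semigroup `P_t = e^{−tℒ}` as a matrix. -/
noncomputable def heatMat (μ : V → V → ℝ) (m : V → ℝ) (t : ℝ) : Matrix V V ℝ :=
  NormedSpace.exp ((-t) • lapMat μ m)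

/-- `P_t f`. -/
noncomputable def heatSG (μ : V → V → ℝ) (m : V → ℝ) (t : ℝ) (f : V → ℝ) : V → ℝ :=
  (heatMat μ m t).mulVec f

/-- The heat kernel measure `p_x^t(y) = m(y)·(P_t δ_x)(y)/m(x)`. -/
noncomputable def heatKer (μ : V → V → ℝ) (m : V → ℝ) (t : ℝ) (x y : V) : ℝ :=
  m y * heatSG μ m t (fun z => if z = x then 1 else 0) y / m x

/-- `π` is a coupling of the probability measures `ν₀` and `ν₁`. -/
def IsCoupling (π : V → V → ℝ) (ν₀ ν₁ : V → ℝ) : Prop :=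
  (∀ x y, 0 ≤ π x y) ∧ (∀ x, ∑ y, π x y = ν₀ x) ∧ (∀ y, ∑ x, π x y = ν₁ y)

/-- Wasserstein distance for the (possibly non-symmetric) cost `d`. -/
noncomputable def wass (d : V → V → ℝ) (ν₀ ν₁ : V → ℝ) : ℝ :=
  sInf {r : ℝ | ∃ π : V → V → ℝ, IsCoupling π ν₀ ν₁ ∧ r = ∑ x, ∑ y, d x y * π x y}

/-- Lipschitz constant with respect to the (non-symmetric) distance `d`. -/
noncomputable def lipConst (d : V → V → ℝ) (f : V → ℝ) : ℝ :=
  sSup {r : ℝ | ∃ x y, x ≠ y ∧ r = (f y - f x) / d x y}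

/-- The Lin–Lu–Yau type Ricci curvature of the directed graph, via the limit-free
formula `κ(x,y) = inf {∇_{xy} ℒf : f 1-Lipschitz, ∇_{xy} f = 1}`. -/
noncomputable def ricci (μ : V → V → ℝ) (m : V → ℝ) (x y : V) : ℝ :=
  sInf {r : ℝ | ∃ f : V → ℝ, (∀ a b, f b - f a ≤ gdist μ a b) ∧
    (f y - f x) / gdist μ x y = 1 ∧
    r = (lap μ m f y - lap μ m f x) / gdist μ x y}
section Proof
set_option linter.unusedSectionVars false
set_option maxHeartbeats 1000000

variable {V : Type*} [Fintype V] [DecidableEq V]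
variable {μ : V → V → ℝ} {m : V → ℝ} {K Λ : ℝ}

lemma gdist_nonneg (μ : V → V → ℝ) (x y : V) : 0 ≤ gdist μ x y := Nat.cast_nonneg _

lemma gdist_self (μ : V → V → ℝ) (x : V) : gdist μ x x = 0 := by
  have h0 : 0 ∈ {n : ℕ | PathLen μ n x x} :=
    ⟨fun _ => x, rfl, rfl, fun i hi => absurd hi (Nat.not_lt_zero i)⟩
  have : sInf {n : ℕ | PathLen μ n x x} = 0 := Nat.sInf_eq_zero.2 (Or.inl h0)
  simp [gdist, this]

lemma one_le_gdist (hG : IsGraph μ) {x y : V} (h : x ≠ y) : (1 : ℝ) ≤ gdist μ x y := by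
  obtain ⟨n, hn⟩ := hG.2.2 x y
  have hne : {k : ℕ | PathLen μ k x y}.Nonempty := ⟨n, hn⟩
  have hmem := Nat.sInf_mem hne
  have hz : sInf {k : ℕ | PathLen μ k x y} ≠ 0 := by
    intro h0
    rw [h0] at hmem
    obtain ⟨p, hp0, hpn, -⟩ := hmem
    exact h (hp0 ▸ hpn ▸ rfl)
  have h1 : 1 ≤ sInf {k : ℕ | PathLen μ k x y} := Nat.one_le_iff_ne_zero.2 hz
  unfold gdist
  exact_mod_cast h1

lemma gdist_pos (hG : IsGraph μ) {x y : V} (h : x ≠ y) : 0 < gdist μ x y :=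
  lt_of_lt_of_le one_pos (one_le_gdist hG h)

lemma sum_mu_pos (hG : IsGraph μ) [Nontrivial V] (x : V) : 0 < ∑ z, μ x z := by
  obtain ⟨y, hy⟩ := exists_ne x
  obtain ⟨n, p, hp0, hpn, hstep⟩ := hG.2.2 x y
  have hn : n ≠ 0 := by rintro rfl; exact hy (hpn ▸ hp0 ▸ rfl)
  have h1 : 0 < μ x (p 1) := by
    have := hstep 0 (Nat.pos_of_ne_zero hn)
    rwa [hp0] at this
  exact lt_of_lt_of_le h1 (Finset.single_le_sum (fun z _ => hG.1 x z) (Finset.mem_univ _))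

lemma ker_nonneg (hG : IsGraph μ) [Nontrivial V] (x y : V) : 0 ≤ ker μ x y :=
  div_nonneg (hG.1 x y) (sum_mu_pos hG x).le

lemma sum_ker (hG : IsGraph μ) [Nontrivial V] (x : V) : ∑ y, ker μ x y = 1 := by
  unfold ker
  rw [← Finset.sum_div]
  exact div_self (sum_mu_pos hG x).ne'

lemma ker_eq_zero (hG : IsGraph μ) {x y : V} (h : ¬ 0 < μ x y) : ker μ x y = 0 := by
  have : μ x y = 0 := le_antisymm (not_lt.1 h) (hG.1 x y)
  simp [ker, this]

lemma meanKer_nonneg (hG : IsGraph μ) (hP : IsPerron μ m) [Nontrivial V] (x y : V) :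
    0 ≤ meanKer μ m x y := by
  have h1 := ker_nonneg hG x y
  have h2 := ker_nonneg hG y x
  have := (hP.1 x).le
  have := (hP.1 y).le
  unfold meanKer
  positivity

lemma sum_meanKer (hG : IsGraph μ) (hP : IsPerron μ m) [Nontrivial V] (x : V) :
    ∑ y, meanKer μ m x y = 1 := by
  unfold meanKer
  rw [← Finset.sum_div, Finset.sum_add_distrib, sum_ker hG x]
  have h1 : ∑ y, m y * ker μ y x / m x = (∑ y, m y * ker μ y x) / m x := by
    rw [Finset.sum_div]
  rw [h1, ← hP.2.2 x, div_self (hP.1 x).ne']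
  norm_num

lemma meanKer_rev (hP : IsPerron μ m) (x y : V) :
    m x * meanKer μ m x y = m y * meanKer μ m y x := by
  have h1 := (hP.1 x).ne'
  have h2 := (hP.1 y).ne'
  unfold meanKer
  field_simp
  ring

lemma edge_of_meanKer_pos (hG : IsGraph μ) (hP : IsPerron μ m) [Nontrivial V] {x y : V}
    (h : 0 < meanKer μ m x y) : 0 < μ x y ∨ 0 < μ y x := by
  by_contra hc
  push_neg at hc
  have h1 : ker μ x y = 0 := ker_eq_zero hG (not_lt.2 hc.1)
  have h2 : ker μ y x = 0 := ker_eq_zero hG (not_lt.2 hc.2)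
  rw [meanKer, h1, h2] at h
  simp at h

lemma lap_apply (μ : V → V → ℝ) (m : V → ℝ) (f : V → ℝ) (x : V) :
    lap μ m f x = f x - ∑ y, meanKer μ m x y * f y := by
  unfold lap lapMat
  rw [Matrix.sub_mulVec, Matrix.one_mulVec]
  simp [Matrix.mulVec, dotProduct]

lemma lap_apply' (hG : IsGraph μ) (hP : IsPerron μ m) [Nontrivial V] (f : V → ℝ) (x : V) :
    lap μ m f x = ∑ y, meanKer μ m x y * (f x - f y) := by
  rw [lap_apply]
  have h2 : ∑ y, meanKer μ m x y * (f x - f y)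
      = (∑ y, meanKer μ m x y * f x) - ∑ y, meanKer μ m x y * f y := by
    rw [← Finset.sum_sub_distrib]
    exact Finset.sum_congr rfl fun y _ => by ring
  rw [h2, ← Finset.sum_mul, sum_meanKer hG hP, one_mul]

lemma lap_smul (μ : V → V → ℝ) (m : V → ℝ) (c : ℝ) (f : V → ℝ) :
    lap μ m (c • f) = c • lap μ m f := by
  unfold lap
  exact Matrix.mulVec_smul _ _ _

lemma sum_lap_identity (hG : IsGraph μ) (hP : IsPerron μ m) [Nontrivial V] (v u : V → ℝ) :
    2 * ∑ x, m x * (v x * lap μ m u x)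
      = ∑ x, ∑ y, m x * meanKer μ m x y * ((v x - v y) * (u x - u y)) := by
  have hT : ∑ x, m x * (v x * lap μ m u x)
      = ∑ x, ∑ y, m x * meanKer μ m x y * (v x * (u x - u y)) := by
    refine Finset.sum_congr rfl fun x _ => ?_
    rw [lap_apply' hG hP, Finset.mul_sum]
    · rw [Finset.mul_sum]
      exact Finset.sum_congr rfl fun y _ => by ring
  have hT2 : ∑ x, m x * (v x * lap μ m u x)
      = ∑ x, ∑ y, m x * meanKer μ m x y * (v y * (u y - u x)) := by
    rw [hT]
    rw [Finset.sum_comm]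
    refine Finset.sum_congr rfl fun y _ => Finset.sum_congr rfl fun x _ => ?_
    have := meanKer_rev hP x y
    calc m x * meanKer μ m x y * (v x * (u x - u y))
        = (m x * meanKer μ m x y) * (v x * (u x - u y)) := by ring
      _ = (m y * meanKer μ m y x) * (v x * (u x - u y)) := by rw [this]
      _ = m y * meanKer μ m y x * (v x * (u x - u y)) := by ring
  calc 2 * ∑ x, m x * (v x * lap μ m u x)
      = (∑ x, ∑ y, m x * meanKer μ m x y * (v x * (u x - u y)))
        + ∑ x, ∑ y, m x * meanKer μ m x y * (v y * (u y - u x)) := by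
        rw [← hT, ← hT2]; ring
    _ = ∑ x, ∑ y, m x * meanKer μ m x y * ((v x - v y) * (u x - u y)) := by
        rw [← Finset.sum_add_distrib]
        refine Finset.sum_congr rfl fun x _ => ?_
        rw [← Finset.sum_add_distrib]
        exact Finset.sum_congr rfl fun y _ => by ring

lemma sum_m_lap (hG : IsGraph μ) (hP : IsPerron μ m) [Nontrivial V] (u : V → ℝ) :
    ∑ x, m x * lap μ m u x = 0 := by
  have h := sum_lap_identity hG hP (fun _ => 1) u
  simp only [sub_self, zero_mul, mul_zero, Finset.sum_const_zero] at h
  have h2 : ∑ x, m x * ((1:ℝ) * lap μ m u x) = ∑ x, m x * lap μ m u x :=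
    Finset.sum_congr rfl fun x _ => by ring
  linarith [h, h2]

/-- Extract the curvature inequality for a `c`-Lipschitz function attaining slope `c`. -/
lemma curv_bound (hG : IsGraph μ) (hK : 0 < K)
    (hcurv : ∀ x y : V, x ≠ y → K ≤ ricci μ m x y)
    (u : V → ℝ) {c : ℝ} (hc : 0 < c)
    (hLip : ∀ a b, u b - u a ≤ c * gdist μ a b) {x y : V} (hxy : x ≠ y)
    (hsl : u y - u x = c * gdist μ x y) :
    K * (c * gdist μ x y) ≤ lap μ m u y - lap μ m u x := by
  set d : ℝ := gdist μ x y with hd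
  have hdpos : 0 < d := gdist_pos hG hxy
  set g : V → ℝ := c⁻¹ • u with hg
  have hgL : ∀ a b, g b - g a ≤ gdist μ a b := by
    intro a b
    have := hLip a b
    have h2 : g b - g a = c⁻¹ * (u b - u a) := by simp [hg]; ring
    rw [h2]
    calc c⁻¹ * (u b - u a) ≤ c⁻¹ * (c * gdist μ a b) := by
          apply mul_le_mul_of_nonneg_left this (by positivity)
      _ = gdist μ a b := by field_simp
  have hgsl : (g y - g x) / gdist μ x y = 1 := by
    have h2 : g y - g x = c⁻¹ * (u y - u x) := by simp [hg]; ring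
    rw [h2, hsl, ← hd]
    field_simp
  set r : ℝ := (lap μ m g y - lap μ m g x) / gdist μ x y with hr
  have hmem : r ∈ {r : ℝ | ∃ f : V → ℝ, (∀ a b, f b - f a ≤ gdist μ a b) ∧
      (f y - f x) / gdist μ x y = 1 ∧
      r = (lap μ m f y - lap μ m f x) / gdist μ x y} := ⟨g, hgL, hgsl, rfl⟩
  have hKr : K ≤ r := by
    by_cases hbdd : BddBelow {r : ℝ | ∃ f : V → ℝ, (∀ a b, f b - f a ≤ gdist μ a b) ∧
      (f y - f x) / gdist μ x y = 1 ∧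
      r = (lap μ m f y - lap μ m f x) / gdist μ x y}
    · exact le_trans (hcurv x y hxy) (csInf_le hbdd hmem)
    · exfalso
      have h0 : ricci μ m x y = 0 := Real.sInf_of_not_bddBelow hbdd
      have h1 := hcurv x y hxy
      rw [h0] at h1
      linarith
  have hlapg : lap μ m g = c⁻¹ • lap μ m u := by
    rw [hg, lap_smul]
  have hexp : lap μ m u y - lap μ m u x = c * (r * d) := by
    have h2 : lap μ m g y - lap μ m g x = c⁻¹ * (lap μ m u y - lap μ m u x) := by
      rw [hlapg]; simp; ring
    have h3 : r * d = lap μ m g y - lap μ m g x := by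
      rw [hr, ← hd]; field_simp
    rw [h3, h2]; field_simp
  rw [hexp]
  have : K * d ≤ r * d := mul_le_mul_of_nonneg_right hKr hdpos.le
  calc K * (c * d) = c * (K * d) := by ring
    _ ≤ c * (r * d) := mul_le_mul_of_nonneg_left this hc.le

/-- Our heat semigroup. -/
noncomputable def hSG (μ : V → V → ℝ) (m : V → ℝ) (u : V → ℝ) (t : ℝ) : V → ℝ :=
  (NormedSpace.exp (t • (-(lapMat μ m)))).mulVec u

lemma hasDerivAt_expMulVec (A : Matrix V V ℝ) (u : V → ℝ) (x : V) (t : ℝ) :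
    HasDerivAt (fun s : ℝ => (NormedSpace.exp (s • A)).mulVec u x)
      ((A * NormedSpace.exp (t • A)).mulVec u x) t := by
  letI : SeminormedRing (Matrix V V ℝ) := Matrix.linftyOpSemiNormedRing
  letI : NormedRing (Matrix V V ℝ) := Matrix.linftyOpNormedRing
  letI : NormedAlgebra ℝ (Matrix V V ℝ) := Matrix.linftyOpNormedAlgebra
  letI : CompleteSpace (Matrix V V ℝ) := FiniteDimensional.complete ℝ _
  have h := hasDerivAt_exp_smul_const' (𝕂 := ℝ) A t
  let L : Matrix V V ℝ →ₗ[ℝ] ℝ :=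
    { toFun := fun M => M.mulVec u x
      map_add' := fun M N => by simp [Matrix.add_mulVec]
      map_smul' := fun c M => by simp [Matrix.smul_mulVec] }
  exact (L.toContinuousLinearMap.hasFDerivAt
    (x := NormedSpace.exp (t • A))).comp_hasDerivAt t h

lemma hasDerivAt_hSG (μ : V → V → ℝ) (m : V → ℝ) (u : V → ℝ) (x : V) (t : ℝ) :
    HasDerivAt (fun s : ℝ => hSG μ m u s x) (-(lap μ m (hSG μ m u t) x)) t := by
  have h := hasDerivAt_expMulVec (-(lapMat μ m)) u x t
  have h2 : ((-(lapMat μ m)) * NormedSpace.exp (t • (-(lapMat μ m)))).mulVec u x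
      = -(lap μ m (hSG μ m u t) x) := by
    rw [← Matrix.mulVec_mulVec, Matrix.neg_mulVec]
    unfold lap hSG
    simp
  rw [h2] at h
  exact h

lemma hSG_zero (μ : V → V → ℝ) (m : V → ℝ) (u : V → ℝ) : hSG μ m u 0 = u := by
  unfold hSG
  rw [zero_smul, NormedSpace.exp_zero, Matrix.one_mulVec]

/-- The gradient/Lipschitz decay estimate for the heat semigroup. -/
lemma grad_est (hG : IsGraph μ) (hP : IsPerron μ m) [Nontrivial V] (hK : 0 < K)
    (hcurv : ∀ x y : V, x ≠ y → K ≤ ricci μ m x y)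
    (u : V → ℝ) (hu : ∀ a b, u b - u a ≤ gdist μ a b) {t : ℝ} (ht : 0 ≤ t) :
    ∀ a b, hSG μ m u t b - hSG μ m u t a ≤ Real.exp (-(K * t)) * gdist μ a b := by
  classical
  set g : ℝ → V → ℝ := fun s => hSG μ m u s with hgdef
  obtain ⟨x0, y0, hxy0⟩ := exists_pair_ne V
  set prs : Finset (V × V) := Finset.univ.filter (fun p : V × V => p.1 ≠ p.2) with hprs
  have hprsne : prs.Nonempty := ⟨(x0, y0), by simp [hprs, hxy0]⟩
  have hmem : ∀ p : V × V, p ∈ prs ↔ p.1 ≠ p.2 := by simp [hprs]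
  set φ : V × V → ℝ → ℝ := fun p s => (g s p.2 - g s p.1) / gdist μ p.1 p.2 with hφ
  set φ' : V × V → ℝ → ℝ :=
    fun p s => (-(lap μ m (g s) p.2) - -(lap μ m (g s) p.1)) / gdist μ p.1 p.2 with hφ'
  have hder : ∀ p s, HasDerivAt (φ p) (φ' p s) s := fun p s =>
    ((hasDerivAt_hSG μ m u p.2 s).sub (hasDerivAt_hSG μ m u p.1 s)).div_const _
  have hcont : ∀ p, Continuous (φ p) := fun p =>
    continuous_iff_continuousAt.2 fun s => (hder p s).continuousAt
  set M : ℝ → ℝ := fun s => prs.sup' hprsne (fun p => φ p s) with hM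
  have hMcont : Continuous M := Continuous.finset_sup'_apply hprsne (fun p _ => hcont p)
  set F : ℝ → Finset (V × V) := fun s => prs.filter (fun p => φ p s = M s) with hF
  have hFne : ∀ s, (F s).Nonempty := by
    intro s
    obtain ⟨p, hp, he⟩ := Finset.exists_mem_eq_sup' hprsne (fun p => φ p s)
    exact ⟨p, Finset.mem_filter.2 ⟨hp, he.symm⟩⟩
  set f' : ℝ → ℝ := fun s => (F s).sup' (hFne s) (fun p => φ' p s) with hf'def
  -- the liminf slope condition
  have hslope : ∀ s r : ℝ, f' s < r → ∃ᶠ z in nhdsWithin s (Set.Ioi s), slope M s z < r := by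
    intro s r hr
    have h1 : ∀ q ∈ F s, ∀ᶠ z in nhdsWithin s (Set.Ioi s), slope (φ q) s z < r := by
      intro q hq
      have hd : φ' q s < r := lt_of_le_of_lt (Finset.le_sup' (fun p => φ' p s) hq) hr
      have htend := hasDerivAt_iff_tendsto_slope.1 (hder q s)
      have hev : ∀ᶠ z in nhdsWithin s {s}ᶜ, slope (φ q) s z < r :=
        htend.eventually_lt_const hd
      exact hev.filter_mono (nhdsWithin_mono s (fun z hz => ne_of_gt hz))
    have h1' : ∀ᶠ z in nhdsWithin s (Set.Ioi s), ∀ q ∈ F s, slope (φ q) s z < r :=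
      (Filter.eventually_all_finset (F s)).2 h1
    have h2 : ∀ᶠ z in nhdsWithin s (Set.Ioi s),
        M z ≤ (F s).sup' (hFne s) (fun q => φ q z) := by
      by_cases hT : (prs \ F s).Nonempty
      · set β := (prs \ F s).sup' hT (fun p => φ p s) with hβ
        have hβlt : β < M s := by
          rw [hβ, Finset.sup'_lt_iff]
          intro p hp
          obtain ⟨hp1, hp2⟩ := Finset.mem_sdiff.1 hp
          have hle : φ p s ≤ M s := Finset.le_sup' (fun q => φ q s) hp1
          have hne : φ p s ≠ M s := fun h => hp2 (Finset.mem_filter.2 ⟨hp1, h⟩)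
          exact lt_of_le_of_ne hle hne
        set δ := (M s - β) / 2 with hδ
        have hδpos : 0 < δ := by rw [hδ]; linarith
        have h3 : ∀ p ∈ prs, ∀ᶠ z in nhdsWithin s (Set.Ioi s), |φ p z - φ p s| < δ := by
          intro p _
          have hc : Filter.Tendsto (φ p) (nhds s) (nhds (φ p s)) := ((hcont p).tendsto s)
          have := Metric.tendsto_nhds.1 hc δ hδpos
          simp only [Real.dist_eq] at this
          exact this.filter_mono nhdsWithin_le_nhds
        have h3' : ∀ᶠ z in nhdsWithin s (Set.Ioi s), ∀ p ∈ prs, |φ p z - φ p s| < δ :=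
          (Filter.eventually_all_finset prs).2 h3
        filter_upwards [h3'] with z hz
        obtain ⟨q0, hq0⟩ := hFne s
        have hq0prs : q0 ∈ prs := (Finset.mem_filter.1 hq0).1
        have hq0eq : φ q0 s = M s := (Finset.mem_filter.1 hq0).2
        apply Finset.sup'_le
        intro p hp
        by_cases hpF : p ∈ F s
        · exact Finset.le_sup' (fun q => φ q z) hpF
        · have hpT : p ∈ prs \ F s := Finset.mem_sdiff.2 ⟨hp, hpF⟩
          have h4 : φ p s ≤ β := Finset.le_sup' (fun q => φ q s) hpT
          have h5 : φ p z < M s - δ := by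
            have h6 := (abs_lt.1 (hz p hp)).2
            rw [hδ] at *
            linarith
          have h6 : M s - δ < φ q0 z := by
            have h7 := (abs_lt.1 (hz q0 hq0prs)).1
            rw [hδ] at *
            linarith
          exact le_trans h5.le (le_trans h6.le (Finset.le_sup' (fun q => φ q z) hq0))
      · have heq : F s = prs := by
          have hsub : F s ⊆ prs := Finset.filter_subset _ _
          have hemp : prs \ F s = ∅ := Finset.not_nonempty_iff_eq_empty.1 hT
          exact Finset.Subset.antisymm hsub (Finset.sdiff_eq_empty_iff_subset.1 hemp)
        apply Filter.Eventually.of_forall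
        intro z
        exact le_of_eq (Finset.sup'_congr hprsne heq.symm (fun _ _ => rfl))
    have h7 : ∀ᶠ z in nhdsWithin s (Set.Ioi s), slope M s z < r := by
      filter_upwards [h1', h2, self_mem_nhdsWithin] with z hz1 hz2 hz3
      have hzs : 0 < z - s := sub_pos.2 hz3
      have h8 : (F s).sup' (hFne s) (fun q => φ q z) < M s + r * (z - s) := by
        rw [Finset.sup'_lt_iff]
        intro q hq
        have hqs : φ q s = M s := (Finset.mem_filter.1 hq).2
        have h9 := hz1 q hq
        rw [slope_def_field] at h9
        have h10 := (div_lt_iff₀ hzs).1 h9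
        linarith
      have h9 : M z < M s + r * (z - s) := lt_of_le_of_lt hz2 h8
      rw [slope_def_field, div_lt_iff₀ hzs]
      linarith
    exact h7.frequently
  -- bound at contact points
  have hbound : ∀ ε : ℝ, 0 < ε → ∀ s : ℝ, M s = Real.exp ((ε - K) * s) →
      f' s < (ε - K) * Real.exp ((ε - K) * s) := by
    intro ε hε s hMeq
    have hMpos : 0 < M s := hMeq ▸ Real.exp_pos _
    have h1 : ∀ q ∈ F s, φ' q s ≤ -(K * M s) := by
      intro q hq
      obtain ⟨hq1, hq2⟩ := Finset.mem_filter.1 hq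
      have hqne : q.1 ≠ q.2 := (hmem q).1 hq1
      have hd := gdist_pos hG hqne
      have hLip : ∀ a b, g s b - g s a ≤ M s * gdist μ a b := by
        intro a b
        by_cases hab : a = b
        · subst hab; rw [gdist_self]; simp
        · have hpab : (a, b) ∈ prs := (hmem (a, b)).2 hab
          have hle : φ (a, b) s ≤ M s := Finset.le_sup' (fun p => φ p s) hpab
          have hdab := gdist_pos hG hab
          simp only [hφ] at hle
          calc g s b - g s a = (g s b - g s a) / gdist μ a b * gdist μ a b := by field_simp
            _ ≤ M s * gdist μ a b := mul_le_mul_of_nonneg_right hle hdab.le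
      have hsl : g s q.2 - g s q.1 = M s * gdist μ q.1 q.2 := by
        have h2 : (g s q.2 - g s q.1) / gdist μ q.1 q.2 = M s := hq2
        field_simp at h2
        linarith
      have hcb := curv_bound hG hK hcurv (g s) hMpos hLip hqne hsl
      simp only [hφ']
      rw [div_le_iff₀ hd]
      nlinarith
    have h2 : f' s ≤ -(K * M s) := Finset.sup'_le _ _ h1
    have h3 : -(K * M s) < (ε - K) * M s := by nlinarith
    calc f' s ≤ -(K * M s) := h2
      _ < (ε - K) * M s := h3
      _ = (ε - K) * Real.exp ((ε - K) * s) := by rw [hMeq]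
  -- apply the fencing theorem
  have hMle : ∀ ε : ℝ, 0 < ε → ∀ s : ℝ, 0 ≤ s → M s ≤ Real.exp ((ε - K) * s) := by
    intro ε hε s hs
    have hM0 : M 0 ≤ 1 := by
      apply Finset.sup'_le
      intro p hp
      have hpne := (hmem p).1 hp
      have hd := gdist_pos hG hpne
      have hg0 : g 0 = u := hSG_zero μ m u
      simp only [hφ, hg0]
      rw [div_le_one hd]
      exact hu p.1 p.2
    have hB : ∀ x : ℝ, HasDerivAt (fun s : ℝ => Real.exp ((ε - K) * s))
        ((ε - K) * Real.exp ((ε - K) * x)) x := by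
      intro x
      have h := ((hasDerivAt_id x).const_mul (ε - K)).exp
      simpa [mul_comm] using h
    have key := image_le_of_liminf_slope_right_lt_deriv_boundary
      (f := M) (f' := f') (a := 0) (b := s) (hMcont.continuousOn)
      (fun x _ r hr => hslope x r hr)
      (B := fun s : ℝ => Real.exp ((ε - K) * s))
      (B' := fun s : ℝ => (ε - K) * Real.exp ((ε - K) * s))
      (by simpa using hM0) hB
      (fun x _ hx => hbound ε hε x hx)
    exact key (Set.right_mem_Icc.2 hs)
  have hMfin : ∀ s : ℝ, 0 ≤ s → M s ≤ Real.exp (-(K * s)) := by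
    intro s hs
    have htend : Filter.Tendsto (fun ε : ℝ => Real.exp ((ε - K) * s)) (nhdsWithin 0 (Set.Ioi 0))
        (nhds (Real.exp (-(K * s)))) := by
      have hc : Continuous (fun ε : ℝ => Real.exp ((ε - K) * s)) := by continuity
      have h0 : Filter.Tendsto (fun ε : ℝ => Real.exp ((ε - K) * s))
          (nhdsWithin 0 (Set.Ioi 0)) (nhds (Real.exp ((0 - K) * s))) :=
        (hc.tendsto 0).mono_left nhdsWithin_le_nhds
      simpa using h0
    refine ge_of_tendsto htend ?_
    filter_upwards [self_mem_nhdsWithin] with ε (hε : ε ∈ Set.Ioi (0:ℝ))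
    exact hMle ε hε s hs
  intro a b
  by_cases hab : a = b
  · subst hab; rw [gdist_self]; simp
  · have hpab : (a, b) ∈ prs := (hmem _).2 hab
    have h1 : φ (a, b) t ≤ M t := Finset.le_sup' (fun p => φ p t) hpab
    have h2 := hMfin t ht
    have hd := gdist_pos hG hab
    have h3 : (g t b - g t a) / gdist μ a b ≤ Real.exp (-(K * t)) := le_trans h1 h2
    calc hSG μ m u t b - hSG μ m u t a
        = (g t b - g t a) / gdist μ a b * gdist μ a b := by
          simp only [hgdef]; field_simp
      _ ≤ Real.exp (-(K * t)) * gdist μ a b := mul_le_mul_of_nonneg_right h3 hd.le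

lemma sum_m_meanKer (hG : IsGraph μ) (hP : IsPerron μ m) [Nontrivial V] (y : V) :
    ∑ x, m x * meanKer μ m x y = m y := by
  calc ∑ x, m x * meanKer μ m x y = ∑ x, m y * meanKer μ m y x :=
        Finset.sum_congr rfl fun x _ => meanKer_rev hP x y
    _ = m y * ∑ x, meanKer μ m y x := by rw [Finset.mul_sum]
    _ = m y := by rw [sum_meanKer hG hP, mul_one]

lemma exp_trapezoid {h : ℝ} (hh : 0 ≤ h) : Real.exp h - 1 ≤ h / 2 * (Real.exp h + 1) := by
  set F : ℝ → ℝ := fun y => Real.exp y - 1 - y / 2 * (Real.exp y + 1) with hF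
  have hder : ∀ y : ℝ, HasDerivAt F
      (Real.exp y - (1 / 2 * (Real.exp y + 1) + y / 2 * Real.exp y)) y := by
    intro y
    have h2 : HasDerivAt (fun y : ℝ => y / 2 * (Real.exp y + 1))
        (1 / 2 * (Real.exp y + 1) + y / 2 * Real.exp y) y := by
      have := ((hasDerivAt_id y).div_const 2).fun_mul ((Real.hasDerivAt_exp y).add_const 1)
      exact this
    have := ((Real.hasDerivAt_exp y).sub_const 1).fun_sub h2
    convert this using 1
  have hdiff : Differentiable ℝ F := fun y => (hder y).differentiableAt
  have hanti : AntitoneOn F (Set.Ici 0) := by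
    apply antitoneOn_of_deriv_nonpos (convex_Ici 0) hdiff.continuous.continuousOn
      (hdiff.differentiableOn)
    intro y hy
    rw [interior_Ici] at hy
    rw [(hder y).deriv]
    have h1 : (1 - y) * Real.exp y ≤ 1 := by
      have h2 := Real.add_one_le_exp (-y)
      have h3 : Real.exp (-y) * Real.exp y = 1 := by
        rw [← Real.exp_add]; simp
      nlinarith [Real.exp_pos y]
    nlinarith [Real.exp_pos y]
  have h0 : F h ≤ F 0 := hanti (Set.self_mem_Ici) hh hh
  have hF0 : F 0 = 0 := by simp [hF]
  rw [hF0] at h0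
  simp only [hF] at h0
  linarith

lemma exp_diff_ineq (l a b : ℝ) (hl : 0 ≤ l) :
    (Real.exp (l * a) - Real.exp (l * b)) * (a - b)
      ≤ l / 2 * ((a - b) ^ 2 * (Real.exp (l * a) + Real.exp (l * b))) := by
  -- reduce to the case b ≤ a by symmetry
  rcases le_total b a with hba | hab
  · have hd : 0 ≤ a - b := by linarith
    have hh : 0 ≤ l * (a - b) := mul_nonneg hl hd
    have htrap := exp_trapezoid hh
    have hEa : Real.exp (l * a) = Real.exp (l * b) * Real.exp (l * (a - b)) := by
      rw [← Real.exp_add]; ring_nf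
    have hEb := Real.exp_pos (l * b)
    set t := Real.exp (l * (a - b)) with ht
    have h2 : (t - 1) * (a - b) ≤ l * (a - b) / 2 * (t + 1) * (a - b) := by
      rcases eq_or_lt_of_le hd with h | h
      · rw [← h]; simp
      · exact mul_le_mul_of_nonneg_right htrap hd
    calc (Real.exp (l * a) - Real.exp (l * b)) * (a - b)
        = Real.exp (l * b) * ((t - 1) * (a - b)) := by rw [hEa]; ring
      _ ≤ Real.exp (l * b) * (l * (a - b) / 2 * (t + 1) * (a - b)) :=
          mul_le_mul_of_nonneg_left h2 hEb.le
      _ = l / 2 * ((a - b) ^ 2 * (Real.exp (l * a) + Real.exp (l * b))) := by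
          rw [hEa]; ring
  · have hd : 0 ≤ b - a := by linarith
    have hh : 0 ≤ l * (b - a) := mul_nonneg hl hd
    have htrap := exp_trapezoid hh
    have hEb : Real.exp (l * b) = Real.exp (l * a) * Real.exp (l * (b - a)) := by
      rw [← Real.exp_add]; ring_nf
    have hEa := Real.exp_pos (l * a)
    set t := Real.exp (l * (b - a)) with ht
    have h2 : (t - 1) * (b - a) ≤ l * (b - a) / 2 * (t + 1) * (b - a) := by
      rcases eq_or_lt_of_le hd with h | h
      · rw [← h]; simp
      · exact mul_le_mul_of_nonneg_right htrap hd
    calc (Real.exp (l * a) - Real.exp (l * b)) * (a - b)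
        = Real.exp (l * a) * ((t - 1) * (b - a)) := by rw [hEb]; ring
      _ ≤ Real.exp (l * a) * (l * (b - a) / 2 * (t + 1) * (b - a)) :=
          mul_le_mul_of_nonneg_left h2 hEa.le
      _ = l / 2 * ((a - b) ^ 2 * (Real.exp (l * a) + Real.exp (l * b))) := by
          rw [hEb]; ring

end Proof

/-- Proposition 4.2: Laplace functional estimate under a positive Ricci curvature bound
and bounded jumps. -/
theorem laplace_functional_estimate {V : Type*} [Fintype V] [DecidableEq V] [Nonempty V]
    (μ : V → V → ℝ) (m : V → ℝ) (K Λ : ℝ)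
    (hG : IsGraph μ) (hP : IsPerron μ m) (hK : 0 < K)
    (hcurv : ∀ x y : V, x ≠ y → K ≤ ricci μ m x y) (hΛ : 1 ≤ Λ)
    (hD : ∀ x y : V, (0 < μ x y ∨ 0 < μ y x) → max (gdist μ x y) (gdist μ y x) ≤ Λ) :
    ∀ f : V → ℝ, (∀ a b, f b - f a ≤ gdist μ a b) → (∑ x, f x * m x = 0) →
      ∀ l : ℝ, 0 ≤ l →
        ∑ x, Real.exp (l * f x) * m x ≤ Real.exp (l ^ 2 * Λ ^ 2 / (4 * K)) := by
  intro f hf hmean l hl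
  have hRpos : (0 : ℝ) ≤ l ^ 2 * Λ ^ 2 / (4 * K) := by positivity
  rcases subsingleton_or_nontrivial V with hV | hV
  · -- trivial graph
    have hall : ∀ z : V, f z = 0 := by
      intro z
      have h1 : ∑ w, f w * m w = (Fintype.card V : ℝ) * (f z * m z) := by
        have h0 : ∀ w : V, f w * m w = f z * m z := fun w => by rw [Subsingleton.elim w z]
        rw [Finset.sum_congr rfl fun w _ => h0 w, Finset.sum_const, Finset.card_univ,
          nsmul_eq_mul]
      rw [hmean] at h1
      have hc : (0 : ℝ) < (Fintype.card V : ℝ) := by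
        have := Fintype.card_pos (α := V)
        exact_mod_cast this
      have h2 : f z * m z = 0 := by
        rcases mul_eq_zero.1 h1.symm with h | h
        · exact absurd h hc.ne'
        · exact h
      rcases mul_eq_zero.1 h2 with h | h
      · exact h
      · exact absurd h (hP.1 z).ne'
    calc ∑ x, Real.exp (l * f x) * m x = ∑ x, m x := by
          refine Finset.sum_congr rfl fun x _ => ?_
          rw [hall x]
          simp
      _ = 1 := hP.2.1
      _ ≤ Real.exp (l ^ 2 * Λ ^ 2 / (4 * K)) := Real.one_le_exp hRpos
  · -- main case
    set g : ℝ → V → ℝ := fun s => hSG μ m f s with hgdef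
    set H : ℝ → ℝ := fun s => ∑ x, Real.exp (l * g s x) * m x with hHdef
    have hgder : ∀ (x : V) (s : ℝ), HasDerivAt (fun r => g r x) (-(lap μ m (g s) x)) s :=
      fun x s => hasDerivAt_hSG μ m f x s
    set H' : ℝ → ℝ :=
      fun s => ∑ x, l * -(lap μ m (g s) x) * Real.exp (l * g s x) * m x with hH'def
    have hHder : ∀ s, HasDerivAt H (H' s) s := by
      intro s
      apply HasDerivAt.fun_sum
      intro x _
      have h1 := (((hgder x s).const_mul l).exp).mul_const (m x)
      exact h1.congr_deriv (by ring)
    have hHpos : ∀ s, 0 < H s :=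
      fun s => Finset.sum_pos (fun x _ => mul_pos (Real.exp_pos _) (hP.1 x))
        Finset.univ_nonempty
    -- key differential inequality
    have hkey : ∀ s : ℝ, 0 ≤ s →
        -(l ^ 2 * Λ ^ 2 / 2 * Real.exp (-(K * s)) ^ 2 * H s) ≤ H' s := by
      intro s hs
      set N : ℝ := Real.exp (-(K * s)) with hN
      have hNpos : 0 < N := Real.exp_pos _
      have hgrad := grad_est hG hP hK hcurv f hf hs
      set E : V → ℝ := fun x => Real.exp (l * g s x) with hE
      have hEpos : ∀ x, 0 < E x := fun x => Real.exp_pos _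
      have hid := sum_lap_identity hG hP E (g s)
      have hH'eq : H' s = -(l / 2) * (2 * ∑ x, m x * (E x * lap μ m (g s) x)) := by
        have hS : H' s = ∑ x, -l * (m x * (E x * lap μ m (g s) x)) := by
          simp only [hH'def, hE]
          exact Finset.sum_congr rfl fun x _ => by ring
        rw [hS, ← Finset.mul_sum]
        ring
      have hS_le : (∑ x, ∑ y, m x * meanKer μ m x y * ((E x - E y) * (g s x - g s y)))
          ≤ ∑ x, ∑ y, m x * meanKer μ m x y *
            (l / 2 * (N ^ 2 * Λ ^ 2) * (E x + E y)) := by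
        refine Finset.sum_le_sum fun x _ => Finset.sum_le_sum fun y _ => ?_
        rcases eq_or_lt_of_le (meanKer_nonneg hG hP x y) with hz | hpos
        · rw [← hz]
          simp
        · apply mul_le_mul_of_nonneg_left _ (mul_nonneg (hP.1 x).le hpos.le)
          have hedge := edge_of_meanKer_pos hG hP hpos
          have hgd := hD x y hedge
          have hgd1 : gdist μ x y ≤ Λ := le_trans (le_max_left _ _) hgd
          have hgd2 : gdist μ y x ≤ Λ := le_trans (le_max_right _ _) hgd
          have h1 : g s x - g s y ≤ N * Λ :=
            le_trans (hgrad y x) (mul_le_mul_of_nonneg_left hgd2 hNpos.le)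
          have h2 : g s y - g s x ≤ N * Λ :=
            le_trans (hgrad x y) (mul_le_mul_of_nonneg_left hgd1 hNpos.le)
          have hsq : (g s x - g s y) ^ 2 ≤ (N * Λ) ^ 2 := sq_le_sq' (by linarith) h1
          have hconv := exp_diff_ineq l (g s x) (g s y) hl
          calc (E x - E y) * (g s x - g s y)
              ≤ l / 2 * ((g s x - g s y) ^ 2 * (E x + E y)) := hconv
            _ ≤ l / 2 * ((N * Λ) ^ 2 * (E x + E y)) := by
                apply mul_le_mul_of_nonneg_left _ (by positivity)
                apply mul_le_mul_of_nonneg_right hsq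
                  (by positivity)
            _ = l / 2 * (N ^ 2 * Λ ^ 2) * (E x + E y) := by ring
      have h_first : ∑ x, ∑ y, m x * meanKer μ m x y * (E x) = H s := by
        calc ∑ x, ∑ y, m x * meanKer μ m x y * E x
            = ∑ x, m x * E x * ∑ y, meanKer μ m x y := by
              refine Finset.sum_congr rfl fun x _ => ?_
              rw [Finset.mul_sum]
              exact Finset.sum_congr rfl fun y _ => by ring
          _ = ∑ x, m x * E x := by
              refine Finset.sum_congr rfl fun x _ => by rw [sum_meanKer hG hP, mul_one]
          _ = H s := by
              simp only [hHdef, hE]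
              exact Finset.sum_congr rfl fun x _ => by ring
      have h_second : ∑ x, ∑ y, m x * meanKer μ m x y * (E y) = H s := by
        rw [Finset.sum_comm]
        calc ∑ y, ∑ x, m x * meanKer μ m x y * E y
            = ∑ y, (∑ x, m x * meanKer μ m x y) * E y := by
              refine Finset.sum_congr rfl fun y _ => ?_
              rw [Finset.sum_mul]
          _ = ∑ y, m y * E y := by
              refine Finset.sum_congr rfl fun y _ => by rw [sum_m_meanKer hG hP]
          _ = H s := by
              simp only [hHdef, hE]
              exact Finset.sum_congr rfl fun y _ => by ring
      have hsum2 : ∑ x, ∑ y, m x * meanKer μ m x y * (l / 2 * (N ^ 2 * Λ ^ 2) * (E x + E y))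
          = l / 2 * (N ^ 2 * Λ ^ 2) * (2 * H s) := by
        calc ∑ x, ∑ y, m x * meanKer μ m x y * (l / 2 * (N ^ 2 * Λ ^ 2) * (E x + E y))
            = ∑ x, ∑ y, (l / 2 * (N ^ 2 * Λ ^ 2) * (m x * meanKer μ m x y * E x)
                + l / 2 * (N ^ 2 * Λ ^ 2) * (m x * meanKer μ m x y * E y)) := by
              exact Finset.sum_congr rfl fun x _ => Finset.sum_congr rfl fun y _ => by ring
          _ = (∑ x, ∑ y, l / 2 * (N ^ 2 * Λ ^ 2) * (m x * meanKer μ m x y * E x))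
              + ∑ x, ∑ y, l / 2 * (N ^ 2 * Λ ^ 2) * (m x * meanKer μ m x y * E y) := by
              rw [← Finset.sum_add_distrib]
              exact Finset.sum_congr rfl fun x _ => by rw [← Finset.sum_add_distrib]
          _ = l / 2 * (N ^ 2 * Λ ^ 2) * (∑ x, ∑ y, m x * meanKer μ m x y * E x)
              + l / 2 * (N ^ 2 * Λ ^ 2) * (∑ x, ∑ y, m x * meanKer μ m x y * E y) := by
              simp only [← Finset.mul_sum]
          _ = l / 2 * (N ^ 2 * Λ ^ 2) * (2 * H s) := by
              rw [h_first, h_second]; ring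
      have hfin : 2 * ∑ x, m x * (E x * lap μ m (g s) x) ≤ l * (N ^ 2 * Λ ^ 2) * H s := by
        rw [hid]
        calc ∑ x, ∑ y, m x * meanKer μ m x y * ((E x - E y) * (g s x - g s y))
            ≤ ∑ x, ∑ y, m x * meanKer μ m x y * (l / 2 * (N ^ 2 * Λ ^ 2) * (E x + E y)) :=
              hS_le
          _ = l / 2 * (N ^ 2 * Λ ^ 2) * (2 * H s) := hsum2
          _ = l * (N ^ 2 * Λ ^ 2) * H s := by ring
      rw [hH'eq]
      have hl2 : -(l / 2) ≤ 0 := by linarith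
      have := mul_le_mul_of_nonpos_left hfin hl2
      calc -(l ^ 2 * Λ ^ 2 / 2 * N ^ 2 * H s) = -(l / 2) * (l * (N ^ 2 * Λ ^ 2) * H s) := by
            ring
        _ ≤ -(l / 2) * (2 * ∑ x, m x * (E x * lap μ m (g s) x)) := this
    -- Gronwall
    set c0 : ℝ := l ^ 2 * Λ ^ 2 / (4 * K) with hc0
    have hc0nn : 0 ≤ c0 := hRpos
    set G : ℝ → ℝ := fun s => Real.exp (c0 * (1 - Real.exp (-(K * s)) ^ 2)) * H s with hGdef
    have hNder : ∀ s : ℝ, HasDerivAt (fun r => Real.exp (-(K * r))) (-K * Real.exp (-(K * s))) s := by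
      intro s
      have h := ((hasDerivAt_id s).const_mul (-K)).exp
      simp only [neg_mul, id_eq] at h ⊢
      convert h using 1
      ring
    have hGder : ∀ s, HasDerivAt G
        (Real.exp (c0 * (1 - Real.exp (-(K * s)) ^ 2))
          * (c0 * (2 * K * Real.exp (-(K * s)) ^ 2) * H s + H' s)) s := by
      intro s
      have h1 : HasDerivAt (fun r => c0 * (1 - Real.exp (-(K * r)) ^ 2))
          (c0 * (2 * K * Real.exp (-(K * s)) ^ 2)) s := by
        have h2 := ((hNder s).fun_pow 2).const_sub 1
        have h3 := h2.const_mul c0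
        exact h3.congr_deriv (by ring)
      have h4 := (h1.exp).fun_mul (hHder s)
      exact h4.congr_deriv (by ring)
    have hGmono : MonotoneOn G (Set.Ici (0 : ℝ)) := by
      have hGdiff : Differentiable ℝ G := fun s => (hGder s).differentiableAt
      apply monotoneOn_of_deriv_nonneg (convex_Ici 0) hGdiff.continuous.continuousOn
        hGdiff.differentiableOn
      intro s hs
      rw [interior_Ici] at hs
      rw [(hGder s).deriv]
      apply mul_nonneg (Real.exp_pos _).le
      have hk := hkey s hs.le
      have h2K : c0 * (2 * K) = l ^ 2 * Λ ^ 2 / 2 := by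
        rw [hc0]
        field_simp
        ring
      have h5 : c0 * (2 * K * Real.exp (-(K * s)) ^ 2) * H s
          = l ^ 2 * Λ ^ 2 / 2 * Real.exp (-(K * s)) ^ 2 * H s := by
        linear_combination (Real.exp (-(K * s)) ^ 2 * H s) * h2K
      linarith [hk, h5]
    -- diameter bound
    set D : ℝ := ∑ x, ∑ y, gdist μ x y with hDdef
    have hDnn : 0 ≤ D := Finset.sum_nonneg fun x _ => Finset.sum_nonneg fun y _ =>
      gdist_nonneg μ x y
    have hgdD : ∀ a b : V, gdist μ a b ≤ D := by
      intro a b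
      calc gdist μ a b ≤ ∑ y, gdist μ a y :=
            Finset.single_le_sum (fun y _ => gdist_nonneg μ a y) (Finset.mem_univ b)
        _ ≤ D := Finset.single_le_sum
            (fun x _ => Finset.sum_nonneg fun y _ => gdist_nonneg μ x y) (Finset.mem_univ a)
    -- mean preservation
    have hmeang : ∀ T : ℝ, ∑ x, g T x * m x = 0 := by
      set ψ : ℝ → ℝ := fun s => ∑ x, g s x * m x with hψdef
      have hψder : ∀ s, HasDerivAt ψ 0 s := by
        intro s
        have h1 : HasDerivAt ψ (∑ x, -(lap μ m (g s) x) * m x) s := by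
          apply HasDerivAt.fun_sum
          intro x _
          exact (hgder x s).mul_const (m x)
        have h2 : ∑ x, -(lap μ m (g s) x) * m x = 0 := by
          have h3 := sum_m_lap hG hP (g s)
          calc ∑ x, -(lap μ m (g s) x) * m x = -∑ x, m x * lap μ m (g s) x := by
                rw [← Finset.sum_neg_distrib]
                exact Finset.sum_congr rfl fun x _ => by ring
            _ = 0 := by rw [h3]; ring
        rwa [h2] at h1
      intro T
      have hconst : ψ T = ψ 0 := is_const_of_deriv_eq_zero
        (fun s => (hψder s).differentiableAt) (fun s => (hψder s).deriv) T 0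
      have hψ0 : ψ 0 = 0 := by
        simp only [hψdef, hgdef, hSG_zero]
        exact hmean
      rw [← hψ0]
      exact hconst
    -- sup bound on g T
    have hsup : ∀ T : ℝ, 0 ≤ T → ∀ x : V, g T x ≤ Real.exp (-(K * T)) * D := by
      intro T hT x
      have hgradT := grad_est hG hP hK hcurv f hf hT
      have hex : ∃ x0 : V, g T x0 ≤ 0 := by
        by_contra hc
        push_neg at hc
        have := Finset.sum_pos (fun x _ => mul_pos (hc x) (hP.1 x)) Finset.univ_nonempty
        rw [hmeang T] at this
        exact lt_irrefl 0 this
      obtain ⟨x0, hx0⟩ := hex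
      have h1 : g T x - g T x0 ≤ Real.exp (-(K * T)) * gdist μ x0 x := hgradT x0 x
      have h2 : Real.exp (-(K * T)) * gdist μ x0 x ≤ Real.exp (-(K * T)) * D :=
        mul_le_mul_of_nonneg_left (hgdD x0 x) (Real.exp_pos _).le
      linarith
    -- final bound for each T
    have hfinal : ∀ T : ℝ, 0 ≤ T →
        H 0 ≤ Real.exp c0 * Real.exp (l * (Real.exp (-(K * T)) * D)) := by
      intro T hT
      have hG0 : G 0 = H 0 := by
        simp [hGdef]
      have h1 : G 0 ≤ G T := hGmono Set.self_mem_Ici hT hT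
      have h2 : G T ≤ Real.exp c0 * H T := by
        simp only [hGdef]
        apply mul_le_mul_of_nonneg_right _ (hHpos T).le
        apply Real.exp_le_exp.2
        have := (Real.exp_pos (-(K * T)))
        nlinarith [sq_nonneg (Real.exp (-(K * T)))]
      have h3 : H T ≤ Real.exp (l * (Real.exp (-(K * T)) * D)) := by
        calc H T ≤ ∑ x, Real.exp (l * (Real.exp (-(K * T)) * D)) * m x := by
              apply Finset.sum_le_sum
              intro x _
              apply mul_le_mul_of_nonneg_right _ (hP.1 x).le
              apply Real.exp_le_exp.2
              exact mul_le_mul_of_nonneg_left (hsup T hT x) hl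
          _ = Real.exp (l * (Real.exp (-(K * T)) * D)) := by
              rw [← Finset.mul_sum, hP.2.1, mul_one]
      calc H 0 = G 0 := hG0.symm
        _ ≤ G T := h1
        _ ≤ Real.exp c0 * H T := h2
        _ ≤ Real.exp c0 * Real.exp (l * (Real.exp (-(K * T)) * D)) :=
            mul_le_mul_of_nonneg_left h3 (Real.exp_pos _).le
    -- take T → ∞
    have hH0 : H 0 = ∑ x, Real.exp (l * f x) * m x := by
      simp only [hHdef, hgdef, hSG_zero]
    have htendexp : Filter.Tendsto (fun T : ℝ => Real.exp (-(K * T))) Filter.atTop (nhds 0) := by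
      apply Real.tendsto_exp_atBot.comp
      have h1 : Filter.Tendsto (fun T : ℝ => K * T) Filter.atTop Filter.atTop :=
        Filter.Tendsto.const_mul_atTop hK Filter.tendsto_id
      exact Filter.tendsto_neg_atTop_atBot.comp h1
    have htend : Filter.Tendsto
        (fun T : ℝ => Real.exp c0 * Real.exp (l * (Real.exp (-(K * T)) * D)))
        Filter.atTop (nhds (Real.exp c0 * 1)) := by
      apply Filter.Tendsto.const_mul
      have h1 : Filter.Tendsto (fun T : ℝ => l * (Real.exp (-(K * T)) * D))
          Filter.atTop (nhds 0) := by
        have h2 := (htendexp.mul_const D).const_mul l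
        simpa using h2
      have h3 := (Real.continuous_exp.tendsto 0).comp h1
      simpa [Function.comp_def] using h3
    have hle : H 0 ≤ Real.exp c0 * 1 := by
      apply ge_of_tendsto htend
      filter_upwards [Filter.eventually_ge_atTop (0 : ℝ)] with T hT
      exact hfinal T hT
    rw [hH0] at hle
    calc ∑ x, Real.exp (l * f x) * m x ≤ Real.exp c0 * 1 := hle
      _ = Real.exp (l ^ 2 * Λ ^ 2 / (4 * K)) := by rw [mul_one, hc0]

end Chung
end

section
/- Let V be a finite set with symmetric weights 𝔪_{xy}, vertex probability measure 𝔪(x) = Σ_y 𝔪_{xy}, non-symmetric distance d with max{d(x,y),d(y,x)} ≤ Λ on edges (Λ ≥ 1), Wasserstein distance W for cost d, and Fisher information ℐ. Let c > 0. If for every probability density ρ one has W(𝔪, ρ𝔪)² ≤ ℐ(ρ)/c², then for every probability density ρ one has W(𝔪, ρ𝔪)² ≤ (√2 Λ/c) ℰ(ρ), where ℰ(ρ) = 𝔪(ρ log ρ) is the relative entropy. -/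
open Finset

/-- `π` is a coupling of the probability measures `ν₀` and `ν₁` on a finite set. -/
def IsCoupling {V : Type*} [Fintype V] (π : V → V → ℝ) (ν₀ ν₁ : V → ℝ) : Prop :=
  (∀ x y, 0 ≤ π x y) ∧ (∀ x, ∑ y, π x y = ν₀ x) ∧ (∀ y, ∑ x, π x y = ν₁ y)

/-- Wasserstein distance for the (possibly non-symmetric) cost `d`. -/
noncomputable def wass {V : Type*} [Fintype V] (d : V → V → ℝ) (ν₀ ν₁ : V → ℝ) : ℝ :=
  sInf {r : ℝ | ∃ π : V → V → ℝ, IsCoupling π ν₀ ν₁ ∧ r = ∑ x, ∑ y, d x y * π x y}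

section Aux


lemma aux_exp (t : ℝ) (ht : 0 ≤ t) : Real.exp t - 1 ≤ t / 2 * (Real.exp t + 1) := by
  set h : ℝ → ℝ := fun t => t / 2 * (Real.exp t + 1) - (Real.exp t - 1) with hh
  have hd : ∀ s : ℝ, HasDerivAt h ((s / 2 - 1 / 2) * Real.exp s + 1 / 2) s := by
    intro s
    have h1 : HasDerivAt (fun s : ℝ => s / 2) (1 / 2) s := (hasDerivAt_id s).div_const 2
    have h2 : HasDerivAt (fun s : ℝ => Real.exp s + 1) (Real.exp s) s :=
      (Real.hasDerivAt_exp s).add_const 1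
    have h3 : HasDerivAt (fun s : ℝ => Real.exp s - 1) (Real.exp s) s :=
      (Real.hasDerivAt_exp s).sub_const 1
    have := (h1.mul h2).sub h3
    exact this.congr_deriv (by ring)
  have hderiv : ∀ s : ℝ, 0 ≤ deriv h s := by
    intro s
    rw [(hd s).deriv]
    have h5 : (1 : ℝ) - s ≤ Real.exp (-s) := by
      have := Real.add_one_le_exp (-s); linarith
    have h6 : (1 - s) * Real.exp s ≤ 1 := by
      have := mul_le_mul_of_nonneg_right h5 (Real.exp_nonneg s)
      rwa [← Real.exp_add, neg_add_cancel, Real.exp_zero] at this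
    nlinarith [Real.exp_pos s]
  have hmono : Monotone h :=
    monotone_of_deriv_nonneg (fun s => (hd s).differentiableAt) hderiv
  have := hmono ht
  simp only [hh] at this ⊢
  simp [Real.exp_zero] at this
  linarith

lemma exp_sq_diff (u v : ℝ) :
    (Real.exp u - Real.exp v) ^ 2 ≤ (u - v) ^ 2 / 2 * (Real.exp (2 * u) + Real.exp (2 * v)) := by
  have main : ∀ u v : ℝ, v ≤ u →
      (Real.exp u - Real.exp v) ^ 2 ≤ (u - v) ^ 2 / 2 * (Real.exp (2 * u) + Real.exp (2 * v)) := by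
    intro u v huv
    set t := u - v with htdef
    have ht : 0 ≤ t := by linarith
    have h1 : Real.exp u - Real.exp v = Real.exp v * (Real.exp t - 1) := by
      rw [mul_sub, mul_one, ← Real.exp_add, htdef]; ring_nf
    have h2 : Real.exp t - 1 ≤ t / 2 * (Real.exp t + 1) := aux_exp t ht
    have h2' : 0 ≤ Real.exp t - 1 := by
      have := Real.one_le_exp ht; linarith
    have h3 : (Real.exp u - Real.exp v) ^ 2 ≤ Real.exp v ^ 2 * (t / 2 * (Real.exp t + 1)) ^ 2 := by
      rw [h1, mul_pow]
      have := mul_le_mul_of_nonneg_left (pow_le_pow_left₀ h2' h2 2) (sq_nonneg (Real.exp v))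
      exact this
    have h4 : (Real.exp t + 1) ^ 2 ≤ 2 * (Real.exp (2 * t) + 1) := by
      have h5 : Real.exp (2 * t) = Real.exp t ^ 2 := by
        rw [two_mul, Real.exp_add, sq]
      nlinarith [sq_nonneg (Real.exp t - 1)]
    have h6 : Real.exp v ^ 2 = Real.exp (2 * v) := by rw [two_mul, Real.exp_add, sq]
    have h7 : Real.exp (2 * v) * Real.exp (2 * t) = Real.exp (2 * u) := by
      rw [← Real.exp_add, htdef]; ring_nf
    calc (Real.exp u - Real.exp v) ^ 2 ≤ Real.exp v ^ 2 * (t / 2 * (Real.exp t + 1)) ^ 2 := h3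
      _ = Real.exp (2 * v) * (t ^ 2 / 4 * (Real.exp t + 1) ^ 2) := by rw [h6]; ring
      _ ≤ Real.exp (2 * v) * (t ^ 2 / 4 * (2 * (Real.exp (2 * t) + 1))) := by
          have := mul_le_mul_of_nonneg_left h4 (by positivity : (0:ℝ) ≤ t ^ 2 / 4)
          exact mul_le_mul_of_nonneg_left this (Real.exp_nonneg _)
      _ = t ^ 2 / 2 * (Real.exp (2 * v) * Real.exp (2 * t) + Real.exp (2 * v)) := by ring
      _ = (u - v) ^ 2 / 2 * (Real.exp (2 * u) + Real.exp (2 * v)) := by rw [h7]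
  rcases le_total v u with h | h
  · exact main u v h
  · have := main v u h
    calc (Real.exp u - Real.exp v) ^ 2 = (Real.exp v - Real.exp u) ^ 2 := by ring
      _ ≤ (v - u) ^ 2 / 2 * (Real.exp (2 * v) + Real.exp (2 * u)) := this
      _ = (u - v) ^ 2 / 2 * (Real.exp (2 * u) + Real.exp (2 * v)) := by ring

section
variable {V : Type*} [Fintype V] [Nonempty V]

/-- The coordinate basis vector as an explicit function. -/
noncomputable def delta {ι : Type*} [DecidableEq ι] (i : ι) : ι → ℝ :=
  fun j => if i = j then 1 else 0

/-- Strong duality, upper-bound direction. -/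
lemma dual_bound (d : V → V → ℝ) (μ ν : V → ℝ) (B : ℝ)
    (hdnn : ∀ x y, 0 ≤ d x y) (hdzero : ∀ x, d x x = 0)
    (htri : ∀ x y z, d x z ≤ d x y + d y z)
    (hμnn : ∀ x, 0 ≤ μ x) (hμ1 : ∑ x, μ x = 1)
    (hνnn : ∀ x, 0 ≤ ν x) (hν1 : ∑ x, ν x = 1)
    (hdual : ∀ h : V → ℝ, (∀ x y, h y - h x ≤ d x y) →
      (∑ y, h y * ν y) - ∑ x, h x * μ x ≤ B) :
    wass d μ ν ≤ B := by
  classical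
  by_contra hcon
  push_neg at hcon
  -- every coupling has cost > B
  have hS : ∀ r ∈ {r : ℝ | ∃ π : V → V → ℝ,
      IsCoupling π μ ν ∧ r = ∑ x, ∑ y, d x y * π x y}, B < r := by
    intro r hr
    refine lt_of_lt_of_le hcon (csInf_le ⟨0, ?_⟩ hr)
    rintro r' ⟨π, hπ, rfl⟩
    exact sum_nonneg fun x _ => sum_nonneg fun y _ => mul_nonneg (hdnn x y) (hπ.1 x y)
  -- ambient space and linear map
  let T : ((V × V) → ℝ) →ₗ[ℝ] ((V → ℝ) × ((V → ℝ) × ℝ)) :=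
    { toFun := fun π => (fun x => ∑ y, π (x, y),
        (fun y => ∑ x, π (x, y), ∑ p : V × V, d p.1 p.2 * π p))
      map_add' := by
        intro p q
        refine Prod.ext (funext fun x => ?_) (Prod.ext (funext fun y => ?_) ?_) <;>
          simp [Finset.sum_add_distrib, mul_add]
      map_smul' := by
        intro c p
        refine Prod.ext (funext fun x => ?_) (Prod.ext (funext fun y => ?_) ?_) <;>
          simp [Finset.mul_sum, mul_left_comm] }
  let b₀ : (V → ℝ) × ((V → ℝ) × ℝ) := (-μ, (-ν, 0))
  let C : Set ((V → ℝ) × ((V → ℝ) × ℝ)) := (fun z => b₀ + z) '' (⇑T '' stdSimplex ℝ (V × V))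
  have hCcomp : IsCompact C :=
    (((isCompact_stdSimplex ℝ (V × V)).image T.continuous_of_finiteDimensional).image
      (continuous_const.add continuous_id))
  have hCconv : Convex ℝ C := ((convex_stdSimplex ℝ _).linear_image T).translate b₀
  let L : Set ((V → ℝ) × ((V → ℝ) × ℝ)) := {p | p.1 = 0 ∧ p.2.1 = 0 ∧ p.2.2 ≤ B}
  have hLclosed : IsClosed L := by
    have h1 : IsClosed {p : (V → ℝ) × ((V → ℝ) × ℝ) | p.1 = 0} :=
      isClosed_eq continuous_fst continuous_const
    have h2 : IsClosed {p : (V → ℝ) × ((V → ℝ) × ℝ) | p.2.1 = 0} :=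
      isClosed_eq (continuous_fst.comp continuous_snd) continuous_const
    have h3 : IsClosed {p : (V → ℝ) × ((V → ℝ) × ℝ) | p.2.2 ≤ B} :=
      isClosed_le (continuous_snd.comp continuous_snd) continuous_const
    exact h1.inter (h2.inter h3)
  have hLconv : Convex ℝ L := by
    rintro p ⟨hp1, hp2, hp3⟩ q ⟨hq1, hq2, hq3⟩ a b ha hb hab
    refine ⟨?_, ?_, ?_⟩
    · show a • p.1 + b • q.1 = 0
      rw [hp1, hq1]; simp
    · show a • p.2.1 + b • q.2.1 = 0
      rw [hp2, hq2]; simp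
    · show a * p.2.2 + b * q.2.2 ≤ B
      have hB : a * B + b * B = B := by rw [← add_mul, hab, one_mul]
      nlinarith [mul_le_mul_of_nonneg_left hp3 ha, mul_le_mul_of_nonneg_left hq3 hb]
  have hdisj : Disjoint L C := by
    rw [Set.disjoint_left]
    rintro p ⟨hp1, hp2, hp3⟩ ⟨q, ⟨π, hπΔ, rfl⟩, rfl⟩
    have hrow : ∀ x, ∑ y, π (x, y) = μ x := by
      intro x
      have h := congrFun hp1 x
      simp only [b₀, T, Prod.fst_add, LinearMap.coe_mk, AddHom.coe_mk, Pi.add_apply,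
        Pi.neg_apply, Pi.zero_apply] at h
      linarith
    have hcol : ∀ y, ∑ x, π (x, y) = ν y := by
      intro y
      have h := congrFun hp2 y
      simp only [b₀, T, Prod.snd_add, Prod.fst_add, LinearMap.coe_mk, AddHom.coe_mk,
        Pi.add_apply, Pi.neg_apply, Pi.zero_apply] at h
      linarith
    have hcost : ∑ p : V × V, d p.1 p.2 * π p ≤ B := by
      have h := hp3
      simp only [b₀, T, Prod.snd_add, LinearMap.coe_mk, AddHom.coe_mk] at h
      linarith
    have hmem : (∑ x, ∑ y, d x y * π (x, y)) ∈ {r : ℝ | ∃ π : V → V → ℝ,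
        IsCoupling π μ ν ∧ r = ∑ x, ∑ y, d x y * π x y} :=
      ⟨fun x y => π (x, y), ⟨fun x y => hπΔ.1 (x, y), hrow, hcol⟩, rfl⟩
    have := hS _ hmem
    rw [← Finset.univ_product_univ, Finset.sum_product] at hcost
    linarith
  -- separation
  obtain ⟨φ, u, v, hLu, huv, hCv⟩ :=
    geometric_hahn_banach_closed_compact hLconv hLclosed hCconv hCcomp hdisj
  set s' : ℝ := φ (0, (0, 1)) with hs'def
  have hphi_t : ∀ t : ℝ, φ ((0, (0, t)) : (V → ℝ) × ((V → ℝ) × ℝ)) = t * s' := by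
    intro t
    have h : ((0, (0, t)) : (V → ℝ) × ((V → ℝ) × ℝ)) = t • ((0, (0, 1))) := by
      rw [Prod.smul_def, Prod.smul_def]
      simp
    rw [h, map_smul, smul_eq_mul]
  have hLt : ∀ t : ℝ, t ≤ B → t * s' < u := by
    intro t ht
    have := hLu (0, (0, t)) ⟨rfl, rfl, ht⟩
    rwa [hphi_t] at this
  have hs'nn : 0 ≤ s' := by
    by_contra hneg
    push_neg at hneg
    set t₀ : ℝ := min B (u / s' - 1) with ht₀
    have h2 : t₀ * s' < u := hLt t₀ (min_le_left _ _)
    have hs'ne : s' ≠ 0 := ne_of_lt hneg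
    have h3 : (u / s' - 1) * s' = u - s' := by field_simp
    have h4 : 0 ≤ (u / s' - 1 - t₀) * (-s') :=
      mul_nonneg (by linarith [min_le_right B (u / s' - 1)]) (by linarith)
    nlinarith
  -- coordinate functionals
  set a : V → ℝ := fun x => φ ((delta x, (0, 0)) : (V → ℝ) × ((V → ℝ) × ℝ)) with hadef
  set bb : V → ℝ := fun y => φ ((0, (delta y, 0)) : (V → ℝ) × ((V → ℝ) × ℝ)) with hbbdef
  have hdec1 : ∀ z : V → ℝ, φ ((z, (0, 0)) : (V → ℝ) × ((V → ℝ) × ℝ)) = ∑ x, z x * a x := by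
    intro z
    have hz : ((z, (0, 0)) : (V → ℝ) × ((V → ℝ) × ℝ))
        = ∑ x, z x • ((delta x, (0, 0)) : (V → ℝ) × ((V → ℝ) × ℝ)) := by
      refine Prod.ext ?_ (Prod.ext ?_ ?_)
      · rw [Prod.fst_sum]
        simp only [Prod.smul_def, smul_zero]
        exact pi_eq_sum_univ z
      · rw [Prod.snd_sum, Prod.fst_sum]
        simp
      · rw [Prod.snd_sum, Prod.snd_sum]
        simp
    rw [hz, map_sum]
    exact sum_congr rfl fun x _ => by rw [map_smul, smul_eq_mul]
  have hdec2 : ∀ z : V → ℝ, φ ((0, (z, 0)) : (V → ℝ) × ((V → ℝ) × ℝ)) = ∑ y, z y * bb y := by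
    intro z
    have hz : ((0, (z, 0)) : (V → ℝ) × ((V → ℝ) × ℝ))
        = ∑ y, z y • ((0, (delta y, 0)) : (V → ℝ) × ((V → ℝ) × ℝ)) := by
      refine Prod.ext ?_ (Prod.ext ?_ ?_)
      · rw [Prod.fst_sum]; simp
      · rw [Prod.snd_sum, Prod.fst_sum]
        simp only [Prod.smul_def, smul_zero]
        exact pi_eq_sum_univ z
      · rw [Prod.snd_sum, Prod.snd_sum]; simp
    rw [hz, map_sum]
    exact sum_congr rfl fun y _ => by rw [map_smul, smul_eq_mul]
  have hsplit : ∀ (p q : V → ℝ) (r : ℝ),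
      φ ((p, (q, r)) : (V → ℝ) × ((V → ℝ) × ℝ))
        = (∑ x, p x * a x) + (∑ y, q y * bb y) + r * s' := by
    intro p q r
    have h : ((p, (q, r)) : (V → ℝ) × ((V → ℝ) × ℝ))
        = (p, (0, 0)) + ((0, (q, 0)) + (0, (0, r))) := by
      refine Prod.ext ?_ (Prod.ext ?_ ?_) <;> simp
    rw [h, map_add, map_add, hdec1, hdec2, hphi_t]
    ring
  set A : ℝ := ∑ x, μ x * a x with hA
  set Bb : ℝ := ∑ y, ν y * bb y with hBb
  -- key inequality at Dirac couplings
  have hkey : ∀ x y : V, v < -A - Bb + (a x + bb y + d x y * s') := by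
    intro x y
    have hmem : (b₀ + T (delta (x, y))) ∈ C := by
      refine ⟨T (delta (x, y)), ⟨delta (x, y), ?_, rfl⟩, rfl⟩
      constructor
      · intro p; unfold delta; split <;> norm_num
      · unfold delta
        rw [Finset.sum_ite_eq univ (x, y) (fun _ => (1:ℝ))]
        simp
    have hval := hCv _ hmem
    have hTδ : T (delta (x, y)) = ((delta x, (delta y, d x y)) : (V → ℝ) × ((V → ℝ) × ℝ)) := by
      refine Prod.ext (funext fun x' => ?_) (Prod.ext (funext fun y' => ?_) ?_)
      · show (∑ y', delta (x, y) (x', y')) = delta x x'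
        unfold delta
        simp only [Prod.mk.injEq]
        by_cases hx : x = x'
        · subst hx
          simp [Finset.sum_ite_eq]
        · simp [hx]
      · show (∑ x', delta (x, y) (x', y')) = delta y y'
        unfold delta
        simp only [Prod.mk.injEq]
        by_cases hy : y = y'
        · subst hy
          simp [Finset.sum_ite_eq]
        · simp [hy]
      · show (∑ p : V × V, d p.1 p.2 * delta (x, y) p) = d x y
        unfold delta
        rw [Finset.sum_congr rfl (fun p _ => by
          rw [mul_ite, mul_one, mul_zero] :
          ∀ p ∈ univ, d p.1 p.2 * (if (x, y) = p then (1:ℝ) else 0)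
            = if (x, y) = p then d p.1 p.2 else 0)]
        rw [Finset.sum_ite_eq univ (x, y) (fun p => d p.1 p.2)]
        simp
    rw [map_add, hTδ, hsplit, hsplit] at hval
    have hda : ∑ x', delta x x' * a x' = a x := by
      unfold delta
      rw [Finset.sum_congr rfl (fun x' _ => by rw [ite_mul, one_mul, zero_mul] :
        ∀ x' ∈ univ, (if x = x' then (1:ℝ) else 0) * a x' = if x = x' then a x' else 0),
        Finset.sum_ite_eq univ x a]
      simp
    have hdb : ∑ y', delta y y' * bb y' = bb y := by
      unfold delta
      rw [Finset.sum_congr rfl (fun y' _ => by rw [ite_mul, one_mul, zero_mul] :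
        ∀ y' ∈ univ, (if y = y' then (1:ℝ) else 0) * bb y' = if y = y' then bb y' else 0),
        Finset.sum_ite_eq univ y bb]
      simp
    rw [hda, hdb] at hval
    have hb₀ : (∑ x, (-μ) x * a x) + (∑ y, (-ν) y * bb y) + (0:ℝ) * s' = -A - Bb := by
      simp only [Pi.neg_apply, neg_mul, Finset.sum_neg_distrib, zero_mul, add_zero, hA, hBb]
      ring
    rw [hb₀] at hval
    linarith
  -- case split on s'
  rcases eq_or_lt_of_le hs'nn with hs0 | hs'pos
  · -- s' = 0 : contradiction via probability averaging
    have hv0 : 0 < v := by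
      have := hLt B le_rfl
      rw [← hs0, mul_zero] at this
      linarith
    obtain ⟨x₀, _, hx₀⟩ := Finset.exists_min_image univ a ⟨Classical.arbitrary V, mem_univ _⟩
    obtain ⟨y₀, _, hy₀⟩ := Finset.exists_min_image univ bb ⟨Classical.arbitrary V, mem_univ _⟩
    have hAge : a x₀ ≤ A := by
      calc a x₀ = ∑ x, μ x * a x₀ := by rw [← Finset.sum_mul, hμ1, one_mul]
        _ ≤ ∑ x, μ x * a x :=
          sum_le_sum fun x _ => mul_le_mul_of_nonneg_left (hx₀ x (mem_univ x)) (hμnn x)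
    have hBge : bb y₀ ≤ Bb := by
      calc bb y₀ = ∑ y, ν y * bb y₀ := by rw [← Finset.sum_mul, hν1, one_mul]
        _ ≤ ∑ y, ν y * bb y :=
          sum_le_sum fun y _ => mul_le_mul_of_nonneg_left (hy₀ y (mem_univ y)) (hνnn y)
    have := hkey x₀ y₀
    rw [← hs0, mul_zero] at this
    linarith
  · -- s' > 0 : build a 1-Lipschitz potential violating hdual
    set F : V → ℝ := fun x => -(a x / s') with hF
    set G : V → ℝ := fun y => (v + A + Bb) / s' - bb y / s' with hG
    have hFG : ∀ x y, F x + G y ≤ d x y := by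
      intro x y
      have h := hkey x y
      have h2 : v + A + Bb - a x - bb y ≤ d x y * s' := by linarith
      have h3 : (v + A + Bb - a x - bb y) / s' ≤ d x y := by
        rw [div_le_iff₀ hs'pos]; linarith
      calc F x + G y = (v + A + Bb - a x - bb y) / s' := by
            simp only [hF, hG]; ring
        _ ≤ d x y := h3
    have hVne : (univ : Finset V).Nonempty := univ_nonempty
    set g : V → ℝ := fun y => univ.inf' hVne (fun x => d x y - F x) with hg
    have hglip : ∀ x y, g y - g x ≤ d x y := by
      intro x y
      obtain ⟨x₀, _, hx₀⟩ := Finset.exists_mem_eq_inf' hVne (fun x' => d x' x - F x')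
      have h1 : g y ≤ d x₀ y - F x₀ := Finset.inf'_le _ (mem_univ x₀)
      have h2 : d x₀ y ≤ d x₀ x + d x y := htri x₀ x y
      have h3 : g x = d x₀ x - F x₀ := hx₀
      linarith
    have hgG : ∀ y, G y ≤ g y := fun y =>
      Finset.le_inf' _ _ fun x _ => by linarith [hFG x y]
    have hgF : ∀ x, g x ≤ -F x := by
      intro x
      have : g x ≤ d x x - F x := Finset.inf'_le _ (mem_univ x)
      rw [hdzero x] at this
      simpa using this
    have hBv : B < v / s' := by
      have := hLt B le_rfl
      rw [lt_div_iff₀ hs'pos]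
      linarith
    have hval : v / s' ≤ (∑ y, g y * ν y) - ∑ x, g x * μ x := by
      have h1 : ∑ y, G y * ν y ≤ ∑ y, g y * ν y :=
        sum_le_sum fun y _ => mul_le_mul_of_nonneg_right (hgG y) (hνnn y)
      have h2 : ∑ x, g x * μ x ≤ ∑ x, (-F x) * μ x :=
        sum_le_sum fun x _ => mul_le_mul_of_nonneg_right (hgF x) (hμnn x)
      have h3 : ∑ y, G y * ν y = (v + A + Bb) / s' - Bb / s' := by
        rw [Finset.sum_congr rfl (fun y _ => by ring :
          ∀ y ∈ univ, G y * ν y = (v + A + Bb) / s' * ν y - (ν y * bb y) / s'),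
          Finset.sum_sub_distrib, ← Finset.mul_sum, hν1, mul_one, ← Finset.sum_div, ← hBb]
      have h4 : ∑ x, (-F x) * μ x = A / s' := by
        rw [Finset.sum_congr rfl (fun x _ => by simp only [hF]; ring :
          ∀ x ∈ univ, (-F x) * μ x = (μ x * a x) / s'),
          ← Finset.sum_div, ← hA]
      have h5 : (v + A + Bb) / s' - Bb / s' - A / s' = v / s' := by ring
      linarith
    have := hdual g hglip
    linarith

lemma prod_coupling (μ ν : V → ℝ) (hμnn : ∀ x, 0 ≤ μ x) (hμ1 : ∑ x, μ x = 1)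
    (hνnn : ∀ x, 0 ≤ ν x) (hν1 : ∑ x, ν x = 1) :
    IsCoupling (fun x y => μ x * ν y) μ ν := by
  refine ⟨fun x y => mul_nonneg (hμnn x) (hνnn y), fun x => ?_, fun y => ?_⟩
  · rw [← Finset.mul_sum, hν1, mul_one]
  · rw [← Finset.sum_mul, hμ1, one_mul]

lemma wass_lower (d : V → V → ℝ) (μ ν : V → ℝ)
    (hμnn : ∀ x, 0 ≤ μ x) (hμ1 : ∑ x, μ x = 1)
    (hνnn : ∀ x, 0 ≤ ν x) (hν1 : ∑ x, ν x = 1)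
    (f : V → ℝ) (hlip : ∀ x y, f y - f x ≤ d x y) :
    (∑ x, f x * ν x) - ∑ x, f x * μ x ≤ wass d μ ν := by
  have hne : Set.Nonempty {r : ℝ | ∃ π : V → V → ℝ, IsCoupling π μ ν ∧ r = ∑ x, ∑ y, d x y * π x y} :=
    ⟨∑ x, ∑ y, d x y * (μ x * ν y), fun x y => μ x * ν y,
      prod_coupling μ ν hμnn hμ1 hνnn hν1, rfl⟩
  apply le_csInf hne
  rintro r ⟨π, ⟨hnn, hrow, hcol⟩, rfl⟩
  have key : ∑ x, ∑ y, (f y - f x) * π x y ≤ ∑ x, ∑ y, d x y * π x y :=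
    sum_le_sum fun x _ => sum_le_sum fun y _ =>
      mul_le_mul_of_nonneg_right (hlip x y) (hnn x y)
  refine le_trans (le_of_eq ?_) key
  have h1 : ∀ x, ∑ y, (f y - f x) * π x y = (∑ y, f y * π x y) - f x * μ x := by
    intro x
    rw [← hrow x, Finset.mul_sum, ← Finset.sum_sub_distrib]
    exact sum_congr rfl fun y _ => by ring
  rw [Finset.sum_congr rfl fun x _ => h1 x, Finset.sum_sub_distrib]
  congr 1
  rw [Finset.sum_comm]
  exact sum_congr rfl fun y _ => by rw [← Finset.mul_sum, hcol y, mul_comm]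

lemma wass_nonneg (d : V → V → ℝ) (hdnn : ∀ x y, 0 ≤ d x y) (μ ν : V → ℝ)
    (hμnn : ∀ x, 0 ≤ μ x) (hμ1 : ∑ x, μ x = 1)
    (hνnn : ∀ x, 0 ≤ ν x) (hν1 : ∑ x, ν x = 1) : 0 ≤ wass d μ ν := by
  have := wass_lower d μ ν hμnn hμ1 hνnn hν1 (fun _ => 0) (fun x y => by simpa using hdnn x y)
  simpa using this

lemma mul_log_ge (x : ℝ) (hx : 0 ≤ x) : x - 1 ≤ x * Real.log x := by
  rcases eq_or_lt_of_le hx with h | h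
  · simp [← h]
  · have h1 : Real.log x⁻¹ ≤ x⁻¹ - 1 := Real.log_le_sub_one_of_pos (by positivity)
    rw [Real.log_inv] at h1
    have h2 : 1 - x⁻¹ ≤ Real.log x := by linarith
    have := mul_le_mul_of_nonneg_left h2 hx
    rw [mul_sub, mul_one, mul_inv_cancel₀ (ne_of_gt h)] at this
    linarith

lemma ent_nonneg (m ρ : V → ℝ) (hmpos : ∀ x, 0 < m x) (hm1 : ∑ x, m x = 1)
    (hρ : ∀ x, 0 ≤ ρ x) (h1 : ∑ x, ρ x * m x = 1) :
    0 ≤ ∑ x, ρ x * Real.log (ρ x) * m x := by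
  have key : ∑ x, (ρ x - 1) * m x ≤ ∑ x, ρ x * Real.log (ρ x) * m x :=
    sum_le_sum fun x _ => mul_le_mul_of_nonneg_right (mul_log_ge _ (hρ x)) (le_of_lt (hmpos x))
  have h2 : ∑ x, (ρ x - 1) * m x = 0 := by
    rw [Finset.sum_congr rfl (fun x _ => by ring : ∀ x ∈ univ, (ρ x - 1) * m x = ρ x * m x - m x),
      Finset.sum_sub_distrib, h1, hm1, sub_self]
  linarith

/-- Donsker–Varadhan, easy direction. -/
lemma dv_bound (m ρ g : V → ℝ) (hmpos : ∀ x, 0 < m x)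
    (hρ : ∀ x, 0 ≤ ρ x) (h1 : ∑ x, ρ x * m x = 1) :
    ∑ x, g x * (ρ x * m x) ≤ (∑ x, ρ x * Real.log (ρ x) * m x)
      + Real.log (∑ x, Real.exp (g x) * m x) := by
  set Z : ℝ := ∑ x, Real.exp (g x) * m x with hZ
  have hZpos : 0 < Z :=
    Finset.sum_pos (fun x _ => mul_pos (Real.exp_pos _) (hmpos x)) univ_nonempty
  have young : ∀ x, ρ x * (g x - Real.log Z)
      ≤ ρ x * Real.log (ρ x) - ρ x + Real.exp (g x) / Z := by
    intro x
    rcases eq_or_lt_of_le (hρ x) with h | h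
    · rw [← h]; simp; positivity
    · have key := Real.add_one_le_exp (g x - Real.log Z - Real.log (ρ x))
      have hexp : Real.exp (g x - Real.log Z - Real.log (ρ x))
          = Real.exp (g x) / (Z * ρ x) := by
        rw [sub_sub, Real.exp_sub, Real.exp_add, Real.exp_log hZpos, Real.exp_log h]
      rw [hexp] at key
      have := mul_le_mul_of_nonneg_left key (le_of_lt h)
      rw [mul_div, mul_comm (ρ x) (Real.exp (g x))] at this
      have heq : Real.exp (g x) * ρ x / (Z * ρ x) = Real.exp (g x) / Z := by
        rw [mul_comm Z (ρ x), ← div_div, mul_div_assoc, div_self (ne_of_gt h), mul_one]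
      rw [heq] at this
      nlinarith
  have key : ∑ x, (ρ x * (g x - Real.log Z)) * m x
      ≤ ∑ x, (ρ x * Real.log (ρ x) - ρ x + Real.exp (g x) / Z) * m x :=
    sum_le_sum fun x _ => mul_le_mul_of_nonneg_right (young x) (le_of_lt (hmpos x))
  have lhs_eq : ∑ x, (ρ x * (g x - Real.log Z)) * m x
      = (∑ x, g x * (ρ x * m x)) - Real.log Z := by
    rw [Finset.sum_congr rfl (fun x _ => by ring :
      ∀ x ∈ univ, (ρ x * (g x - Real.log Z)) * m x
        = g x * (ρ x * m x) - Real.log Z * (ρ x * m x)),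
      Finset.sum_sub_distrib, ← Finset.mul_sum, h1, mul_one]
  have rhs_eq : ∑ x, (ρ x * Real.log (ρ x) - ρ x + Real.exp (g x) / Z) * m x
      = ∑ x, ρ x * Real.log (ρ x) * m x := by
    rw [Finset.sum_congr rfl (fun x _ => by ring :
      ∀ x ∈ univ, (ρ x * Real.log (ρ x) - ρ x + Real.exp (g x) / Z) * m x
        = ρ x * Real.log (ρ x) * m x - ρ x * m x + (Real.exp (g x) * m x) / Z),
      Finset.sum_add_distrib, Finset.sum_sub_distrib, ← Finset.sum_div, ← hZ,
      div_self (ne_of_gt hZpos), h1]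
    ring
  rw [lhs_eq, rhs_eq] at key
  linarith

end

/-- Herbst-type Laplace functional bound from the transportation-information inequality. -/
lemma herbst {V : Type*} [Fintype V] [Nonempty V]
    (w : V → V → ℝ) (m : V → ℝ) (d : V → V → ℝ) (Λ c : ℝ)
    (hsym : ∀ x y, w x y = w y x) (hnn : ∀ x y, 0 ≤ w x y)
    (hm : ∀ x, m x = ∑ y, w x y) (hmpos : ∀ x, 0 < m x) (hprob : ∑ x, m x = 1)
    (hdnn : ∀ x y, 0 ≤ d x y)
    (hΛ : 1 ≤ Λ) (hedge : ∀ x y, 0 < w x y → max (d x y) (d y x) ≤ Λ) (hc : 0 < c)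
    (hTI : ∀ ρ : V → ℝ, (∀ x, 0 ≤ ρ x) → ∑ x, ρ x * m x = 1 →
      wass d m (fun x => ρ x * m x) ^ 2
        ≤ (2 * ∑ x, ∑ y, (Real.sqrt (ρ y) - Real.sqrt (ρ x)) ^ 2 * w x y) / c ^ 2)
    (f : V → ℝ) (hlip : ∀ x y, f y - f x ≤ d x y) (hmean : ∑ x, f x * m x = 0)
    (l : ℝ) (hl : 0 ≤ l) :
    Real.log (∑ x, Real.exp (l * f x) * m x) ≤ (Λ / (Real.sqrt 2 * c)) * l ^ 2 / 2 := by
  have hs2 : (0:ℝ) < Real.sqrt 2 := Real.sqrt_pos.mpr (by norm_num)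
  have hΛ0 : (0:ℝ) < Λ := lt_of_lt_of_le one_pos hΛ
  set K : ℝ := Λ / (Real.sqrt 2 * c) with hK
  have hKpos : 0 < K := div_pos hΛ0 (mul_pos hs2 hc)
  set Efun : ℝ → ℝ := fun t => ∑ x, Real.exp (t * f x) * m x with hEfun
  have hEpos : ∀ t, 0 < Efun t := fun t =>
    Finset.sum_pos (fun x _ => mul_pos (Real.exp_pos _) (hmpos x)) univ_nonempty
  have hEderiv : ∀ t, HasDerivAt Efun (∑ x, f x * Real.exp (t * f x) * m x) t := by
    intro t
    apply HasDerivAt.fun_sum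
    intro x _
    have h1 : HasDerivAt (fun t : ℝ => t * f x) (f x) t := hasDerivAt_mul_const (f x)
    have h2 := (h1.exp).mul_const (m x)
    exact h2.congr_deriv (by ring)
  have hedge2 : ∀ x y, (f y - f x) ^ 2 * w x y ≤ Λ ^ 2 * w x y := by
    intro x y
    rcases eq_or_lt_of_le (hnn x y) with h | h
    · rw [← h, mul_zero, mul_zero]
    · have h1 : d x y ≤ Λ := le_trans (le_max_left _ _) (hedge x y h)
      have h2 : d y x ≤ Λ := le_trans (le_max_right _ _) (hedge x y h)
      have h3 : f y - f x ≤ Λ := le_trans (hlip x y) h1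
      have h4 : f x - f y ≤ Λ := le_trans (hlip y x) h2
      have h5 : (f y - f x) ^ 2 ≤ Λ ^ 2 := sq_le_sq' (by linarith) h3
      exact mul_le_mul_of_nonneg_right h5 (le_of_lt h)
  have key : ∀ t, 0 ≤ t →
      (∑ x, f x * Real.exp (t * f x) * m x) / Efun t ≤ K * t := by
    intro t ht
    have hEt := hEpos t
    set ρ : V → ℝ := fun x => Real.exp (t * f x) / Efun t with hρ
    have hρnn : ∀ x, 0 ≤ ρ x := fun x => div_nonneg (Real.exp_nonneg _) (le_of_lt hEt)
    have hρ1 : ∑ x, ρ x * m x = 1 := by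
      rw [Finset.sum_congr rfl (fun x _ => by rw [div_mul_eq_mul_div] :
        ∀ x ∈ univ, ρ x * m x = (Real.exp (t * f x) * m x) / Efun t),
        ← Finset.sum_div, div_self (ne_of_gt hEt)]
    have hTIρ := hTI ρ hρnn hρ1
    have hsq : ∀ x, Real.sqrt (ρ x) = Real.exp (t * f x / 2) / Real.sqrt (Efun t) := by
      intro x
      rw [hρ]
      show Real.sqrt (Real.exp (t * f x) / Efun t) = _
      rw [Real.sqrt_div (Real.exp_nonneg _)]
      congr 1
      rw [show Real.exp (t * f x) = Real.exp (t * f x / 2) ^ 2 by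
        rw [sq, ← Real.exp_add]; ring_nf]
      exact Real.sqrt_sq (Real.exp_nonneg _)
    have hpt : ∀ x y, (Real.sqrt (ρ y) - Real.sqrt (ρ x)) ^ 2 * w x y ≤
        ((t ^ 2 * (f y - f x) ^ 2 / 8 * (Real.exp (t * f y) + Real.exp (t * f x))) / Efun t)
          * w x y := by
      intro x y
      apply mul_le_mul_of_nonneg_right _ (hnn x y)
      rw [hsq, hsq, div_sub_div_same, div_pow, Real.sq_sqrt (le_of_lt hEt)]
      apply div_le_div_of_nonneg_right _ (le_of_lt hEt)
      have h := exp_sq_diff (t * f y / 2) (t * f x / 2)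
      rw [show 2 * (t * f y / 2) = t * f y by ring,
        show 2 * (t * f x / 2) = t * f x by ring] at h
      calc (Real.exp (t * f y / 2) - Real.exp (t * f x / 2)) ^ 2
          ≤ (t * f y / 2 - t * f x / 2) ^ 2 / 2 * (Real.exp (t * f y) + Real.exp (t * f x)) := h
        _ = t ^ 2 * (f y - f x) ^ 2 / 8 * (Real.exp (t * f y) + Real.exp (t * f x)) := by ring
    have hsw : ∑ x, ∑ y, (f y - f x) ^ 2 * w x y * Real.exp (t * f y)
        = ∑ x, ∑ y, (f y - f x) ^ 2 * w x y * Real.exp (t * f x) := by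
      rw [Finset.sum_comm]
      exact sum_congr rfl fun y _ => sum_congr rfl fun x _ => by
        rw [hsym y x]; ring_nf
    have hSb : ∑ x, ∑ y, (f y - f x) ^ 2 * w x y * Real.exp (t * f x) ≤ Λ ^ 2 * Efun t := by
      calc ∑ x, ∑ y, (f y - f x) ^ 2 * w x y * Real.exp (t * f x)
          = ∑ x, (∑ y, (f y - f x) ^ 2 * w x y) * Real.exp (t * f x) := by
            exact sum_congr rfl fun x _ => by rw [Finset.sum_mul]
        _ ≤ ∑ x, (Λ ^ 2 * m x) * Real.exp (t * f x) := by
            apply sum_le_sum; intro x _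
            apply mul_le_mul_of_nonneg_right _ (Real.exp_nonneg _)
            calc ∑ y, (f y - f x) ^ 2 * w x y ≤ ∑ y, Λ ^ 2 * w x y :=
                  sum_le_sum fun y _ => hedge2 x y
              _ = Λ ^ 2 * m x := by rw [← Finset.mul_sum, ← hm x]
        _ = Λ ^ 2 * Efun t := by
            rw [hEfun, Finset.mul_sum]
            exact sum_congr rfl fun x _ => by ring
    have h2 : ∑ x, ∑ y, ((t ^ 2 * (f y - f x) ^ 2 / 8
          * (Real.exp (t * f y) + Real.exp (t * f x))) / Efun t) * w x y
        = t ^ 2 / (8 * Efun t) * (∑ x, ∑ y, (f y - f x) ^ 2 * w x y * Real.exp (t * f y))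
          + t ^ 2 / (8 * Efun t) * (∑ x, ∑ y, (f y - f x) ^ 2 * w x y * Real.exp (t * f x)) := by
      simp only [Finset.mul_sum]
      rw [← Finset.sum_add_distrib]
      refine sum_congr rfl fun x _ => ?_
      rw [← Finset.sum_add_distrib]
      refine sum_congr rfl fun y _ => ?_
      ring
    have hFish : ∑ x, ∑ y, (Real.sqrt (ρ y) - Real.sqrt (ρ x)) ^ 2 * w x y
        ≤ t ^ 2 * Λ ^ 2 / 4 := by
      have h1 : ∑ x, ∑ y, (Real.sqrt (ρ y) - Real.sqrt (ρ x)) ^ 2 * w x y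
          ≤ ∑ x, ∑ y, ((t ^ 2 * (f y - f x) ^ 2 / 8
              * (Real.exp (t * f y) + Real.exp (t * f x))) / Efun t) * w x y :=
        sum_le_sum fun x _ => sum_le_sum fun y _ => hpt x y
      rw [h2, hsw] at h1
      have h3 : t ^ 2 / (8 * Efun t) * (∑ x, ∑ y, (f y - f x) ^ 2 * w x y * Real.exp (t * f x))
          + t ^ 2 / (8 * Efun t) * (∑ x, ∑ y, (f y - f x) ^ 2 * w x y * Real.exp (t * f x))
          = t ^ 2 / (4 * Efun t) * (∑ x, ∑ y, (f y - f x) ^ 2 * w x y * Real.exp (t * f x)) := by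
        ring
      rw [h3] at h1
      have h4 : t ^ 2 / (4 * Efun t) * (∑ x, ∑ y, (f y - f x) ^ 2 * w x y * Real.exp (t * f x))
          ≤ t ^ 2 / (4 * Efun t) * (Λ ^ 2 * Efun t) :=
        mul_le_mul_of_nonneg_left hSb (by positivity)
      have h5 : t ^ 2 / (4 * Efun t) * (Λ ^ 2 * Efun t) = t ^ 2 * Λ ^ 2 / 4 := by
        field_simp
      linarith
    have hK2 : K ^ 2 = Λ ^ 2 / (2 * c ^ 2) := by
      rw [hK, div_pow, mul_pow, Real.sq_sqrt (by norm_num : (0:ℝ) ≤ 2)]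
    have hWsq : wass d m (fun x => ρ x * m x) ^ 2 ≤ (K * t) ^ 2 := by
      have h6 : (2 * ∑ x, ∑ y, (Real.sqrt (ρ y) - Real.sqrt (ρ x)) ^ 2 * w x y) / c ^ 2
          ≤ 2 * (t ^ 2 * Λ ^ 2 / 4) / c ^ 2 :=
        div_le_div_of_nonneg_right (by linarith) (le_of_lt (pow_pos hc 2))
      have h7 : 2 * (t ^ 2 * Λ ^ 2 / 4) / c ^ 2 = (K * t) ^ 2 := by
        rw [mul_pow, hK2]
        field_simp
        ring
      linarith
    have hmnn : ∀ x, 0 ≤ m x := fun x => (hmpos x).le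
    have hνnn : ∀ x, 0 ≤ ρ x * m x := fun x => mul_nonneg (hρnn x) (hmnn x)
    have hW0 : 0 ≤ wass d m (fun x => ρ x * m x) :=
      wass_nonneg d hdnn m _ hmnn hprob hνnn hρ1
    have hWle : wass d m (fun x => ρ x * m x) ≤ K * t := by
      have h8 := Real.sqrt_le_sqrt hWsq
      rwa [Real.sqrt_sq hW0, Real.sqrt_sq (mul_nonneg hKpos.le ht)] at h8
    have hdual := wass_lower d m (fun x => ρ x * m x) hmnn hprob hνnn hρ1 f hlip
    have hfρ : ∑ x, f x * (ρ x * m x) = (∑ x, f x * Real.exp (t * f x) * m x) / Efun t := by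
      rw [Finset.sum_div]
      exact sum_congr rfl fun x _ => by simp only [hρ]; ring
    rw [hfρ, hmean, sub_zero] at hdual
    linarith
  -- Grönwall
  set G : ℝ → ℝ := fun t => Real.log (Efun t) - K * t ^ 2 / 2 with hG
  have hGd : ∀ t, HasDerivAt G
      ((∑ x, f x * Real.exp (t * f x) * m x) / Efun t - K * t) t := by
    intro t
    have h1 := (hEderiv t).log (ne_of_gt (hEpos t))
    have h2 : HasDerivAt (fun t : ℝ => K * t ^ 2 / 2) (K * t) t := by
      have h3 := (hasDerivAt_pow 2 t).const_mul (K / 2)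
      have h4 : HasDerivAt (fun t : ℝ => K / 2 * t ^ 2) (K * t) t := by
        exact h3.congr_deriv (by push_cast; ring)
      convert h4 using 2
      ring
    exact h1.sub h2
  have hanti : AntitoneOn G (Set.Ici 0) := by
    apply antitoneOn_of_deriv_nonpos (convex_Ici 0)
    · exact fun t _ => (hGd t).continuousAt.continuousWithinAt
    · exact fun t _ => (hGd t).differentiableAt.differentiableWithinAt
    · intro t htin
      rw [(hGd t).deriv]
      rw [interior_Ici] at htin
      have := key t (le_of_lt htin)
      linarith
  have hG0 : G 0 = 0 := by
    have : Efun 0 = 1 := by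
      rw [hEfun]
      simp only [zero_mul, Real.exp_zero, one_mul]
      exact hprob
    rw [hG]
    simp [this]
  have hfin : G l ≤ G 0 := hanti Set.self_mem_Ici hl hl
  rw [hG0] at hfin
  rw [hG] at hfin
  simp only at hfin
  linarith


end Aux

/-- The transportation-information inequality implies the transportation-entropy inequality
on a finite weighted graph with bounded jumps. -/
theorem transport_info_implies_transport_entropy {V : Type*} [Fintype V] [Nonempty V]
    (w : V → V → ℝ) (m : V → ℝ) (d : V → V → ℝ) (Λ c : ℝ)
    (hsym : ∀ x y, w x y = w y x) (hnn : ∀ x y, 0 ≤ w x y)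
    (hm : ∀ x, m x = ∑ y, w x y) (hmpos : ∀ x, 0 < m x) (hprob : ∑ x, m x = 1)
    (hdnn : ∀ x y, 0 ≤ d x y) (hdzero : ∀ x, d x x = 0)
    (hdpos : ∀ x y, x ≠ y → 0 < d x y) (htri : ∀ x y z, d x z ≤ d x y + d y z)
    (hΛ : 1 ≤ Λ) (hedge : ∀ x y, 0 < w x y → max (d x y) (d y x) ≤ Λ) (hc : 0 < c)
    (hTI : ∀ ρ : V → ℝ, (∀ x, 0 ≤ ρ x) → ∑ x, ρ x * m x = 1 →
      wass d m (fun x => ρ x * m x) ^ 2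
        ≤ (2 * ∑ x, ∑ y, (Real.sqrt (ρ y) - Real.sqrt (ρ x)) ^ 2 * w x y) / c ^ 2) :
    ∀ ρ : V → ℝ, (∀ x, 0 ≤ ρ x) → ∑ x, ρ x * m x = 1 →
      wass d m (fun x => ρ x * m x) ^ 2
        ≤ (Real.sqrt 2 * Λ / c) * ∑ x, ρ x * Real.log (ρ x) * m x := by
  intro ρ hρnn hρ1
  have hs2 : (0:ℝ) < Real.sqrt 2 := Real.sqrt_pos.mpr (by norm_num)
  have hΛ0 : (0:ℝ) < Λ := lt_of_lt_of_le one_pos hΛ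
  set K : ℝ := Λ / (Real.sqrt 2 * c) with hK
  have hK0 : 0 < K := div_pos hΛ0 (mul_pos hs2 hc)
  set Ent : ℝ := ∑ x, ρ x * Real.log (ρ x) * m x with hEnt
  have hEntnn : 0 ≤ Ent := ent_nonneg m ρ hmpos hprob hρnn hρ1
  set S : ℝ := Real.sqrt (2 * K * Ent) with hS
  have hSnn : 0 ≤ S := Real.sqrt_nonneg _
  have hSsq : S ^ 2 = 2 * K * Ent := Real.sq_sqrt (by positivity)
  have hmnn : ∀ x, 0 ≤ m x := fun x => (hmpos x).le
  have hνnn : ∀ x, 0 ≤ ρ x * m x := fun x => mul_nonneg (hρnn x) (hmnn x)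
  -- dual estimate for 1-Lipschitz potentials
  have hdualest : ∀ h : V → ℝ, (∀ x y, h y - h x ≤ d x y) →
      (∑ y, h y * (ρ y * m y)) - ∑ x, h x * m x ≤ S := by
    intro h hlip
    set fb : V → ℝ := fun x => h x - ∑ z, h z * m z with hfb
    have hfblip : ∀ x y, fb y - fb x ≤ d x y := by
      intro x y
      simp only [hfb]
      have := hlip x y
      linarith
    have hfbmean : ∑ x, fb x * m x = 0 := by
      rw [Finset.sum_congr rfl (fun x _ => by simp only [hfb]; ring :
        ∀ x ∈ univ, fb x * m x = h x * m x - (∑ z, h z * m z) * m x),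
        Finset.sum_sub_distrib, ← Finset.mul_sum, hprob, mul_one, sub_self]
    set D : ℝ := (∑ y, h y * (ρ y * m y)) - ∑ x, h x * m x with hD
    have hDeq : ∑ x, fb x * (ρ x * m x) = D := by
      rw [Finset.sum_congr rfl (fun x _ => by simp only [hfb]; ring :
        ∀ x ∈ univ, fb x * (ρ x * m x) = h x * (ρ x * m x) - (∑ z, h z * m z) * (ρ x * m x)),
        Finset.sum_sub_distrib, ← Finset.mul_sum, hρ1, mul_one, hD]
    have hbound : ∀ l : ℝ, 0 < l → D ≤ Ent / l + K * l / 2 := by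
      intro l hl
      have hdv := dv_bound m ρ (fun x => l * fb x) hmpos hρnn hρ1
      have hherb := herbst w m d Λ c hsym hnn hm hmpos hprob hdnn hΛ hedge hc hTI
        fb hfblip hfbmean l hl.le
      have hsum : ∑ x, (l * fb x) * (ρ x * m x) = l * D := by
        rw [← hDeq, Finset.mul_sum]
        exact sum_congr rfl fun x _ => by ring
      rw [hsum] at hdv
      have hld : l * D ≤ Ent + K * l ^ 2 / 2 := by
        rw [← hK] at hherb
        calc l * D ≤ Ent + Real.log (∑ x, Real.exp (l * fb x) * m x) := hdv
          _ ≤ Ent + K * l ^ 2 / 2 := by linarith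
      have hdiv : (Ent + K * l ^ 2 / 2) / l = Ent / l + K * l / 2 := by
        field_simp
      calc D = (l * D) / l := by field_simp
        _ ≤ (Ent + K * l ^ 2 / 2) / l := div_le_div_of_nonneg_right hld hl.le
        _ = Ent / l + K * l / 2 := hdiv
    rcases eq_or_lt_of_le hEntnn with h0 | hEpos
    · -- zero entropy
      have hS0 : S = 0 := by rw [hS, ← h0, mul_zero, Real.sqrt_zero]
      rw [hS0]
      by_contra hDpos
      push_neg at hDpos
      have hb := hbound (D / K) (div_pos hDpos hK0)
      rw [← h0] at hb
      have h1 : K * (D / K) = D := by field_simp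
      have h2 : (0:ℝ) / (D / K) = 0 := zero_div _
      rw [h2, h1] at hb
      linarith
    · have hSpos : 0 < S := Real.sqrt_pos.mpr (by positivity)
      have hb := hbound (S / K) (div_pos hSpos hK0)
      have h1 : K * (S / K) = S := by field_simp
      have h2 : Ent / (S / K) = S / 2 := by
        rw [div_div_eq_mul_div,
          div_eq_div_iff (ne_of_gt hSpos) (by norm_num : (2:ℝ) ≠ 0)]
        nlinarith [hSsq]
      rw [h1, h2] at hb
      linarith
  have hwass := dual_bound d m (fun x => ρ x * m x) S hdnn hdzero htri
    hmnn hprob hνnn hρ1 hdualest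
  have hw0 := wass_nonneg d hdnn m (fun x => ρ x * m x) hmnn hprob hνnn hρ1
  have hsqle : wass d m (fun x => ρ x * m x) ^ 2 ≤ S ^ 2 := by
    have := pow_le_pow_left₀ hw0 hwass 2
    exact this
  rw [hSsq] at hsqle
  have h2K : 2 * K = Real.sqrt 2 * Λ / c := by
    have hss : Real.sqrt 2 * Real.sqrt 2 = 2 := Real.mul_self_sqrt (by norm_num)
    rw [hK]
    have hss2 : Real.sqrt 2 ^ 2 = 2 := Real.sq_sqrt (by norm_num)
    field_simp
    linear_combination (-1 : ℝ) * hss2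
  calc wass d m (fun x => ρ x * m x) ^ 2 ≤ 2 * K * Ent := hsqle
    _ = (Real.sqrt 2 * Λ / c) * Ent := by rw [h2K]
end
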